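/- arXiv:1708.07300 — 4 statements merged into one kernel-verified Lean document; each statement's English description precedes it below -/
import Mathlib

section
/- Let X be a real Banach space, V a linear subspace of X, and x an element of X with ‖x‖ = 1. Then the following are equivalent: (1) for every v ∈ V the equality ‖v + x‖ = 1 + ‖v‖ holds; (2) for every continuous linear functional v* : V → ℝ there exists a continuous linear functional x* : X → ℝ extending v* such that ‖x*‖ = ‖v*‖ and x*(x) = ‖v*‖. -/
/-- Key norm identity: if `‖v + x‖ = 1 + ‖v‖` for all `v ∈ V`, then
`‖v + t • x‖ = ‖v‖ + |t|` for all `v ∈ V` and `t : ℝ`. -/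
lemma stmt_0_aux (X : Type*) [NormedAddCommGroup X] [NormedSpace ℝ X]
    (V : Submodule ℝ X) (x : X)
    (h : ∀ v ∈ V, ‖v + x‖ = 1 + ‖v‖) :
    ∀ v ∈ V, ∀ t : ℝ, ‖v + t • x‖ = ‖v‖ + |t| := by
  intro v hv t
  rcases eq_or_ne t 0 with rfl | ht
  · simp
  · have key : ‖v + t • x‖ = |t| * ‖(t⁻¹ • v) + x‖ := by
      have : (t⁻¹ • (v + t • x)) = t⁻¹ • v + x := by
        rw [smul_add, smul_smul, inv_mul_cancel₀ ht, one_smul]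
      calc ‖v + t • x‖ = |t| * ‖t⁻¹ • (v + t • x)‖ := by
            rw [norm_smul, Real.norm_eq_abs, abs_inv]
            field_simp
          _ = |t| * ‖(t⁻¹ • v) + x‖ := by rw [this]
    rw [key, h _ (V.smul_mem _ hv), norm_smul, Real.norm_eq_abs, abs_inv]
    have habs : |t| ≠ 0 := abs_ne_zero.mpr ht
    field_simp
    ring

/-- Characterisation of ℓ₁-orthogonality via norm-attaining extensions
of functionals. -/
theorem stmt_0 (X : Type*) [NormedAddCommGroup X] [NormedSpace ℝ X] [CompleteSpace X]
    (V : Submodule ℝ X) (x : X) (hx : ‖x‖ = 1) :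
    (∀ v ∈ V, ‖v + x‖ = 1 + ‖v‖) ↔
      (∀ vs : V →L[ℝ] ℝ, ∃ xs : X →L[ℝ] ℝ,
        (∀ v : V, xs v = vs v) ∧ ‖xs‖ = ‖vs‖ ∧ xs x = ‖vs‖) := by
  constructor
  · intro h vs
    have hxV : x ∉ V := by
      intro hxV
      have := h (-x) (V.neg_mem hxV)
      simp [hx] at this
      linarith
    have key := stmt_0_aux X V x h
    -- Build the partial linear map on V ⊔ span {x}
    set pf : X →ₗ.[ℝ] ℝ := ⟨V, (vs : V →ₗ[ℝ] ℝ)⟩ with hpf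
    have hxpf : x ∉ pf.domain := hxV
    set g := pf.supSpanSingleton x ‖vs‖ hxpf with hg
    -- Bound: ‖g w‖ ≤ ‖vs‖ * ‖w‖
    have hbound : ∀ w : g.domain, ‖g.toFun w‖ ≤ ‖vs‖ * ‖(w : X)‖ := by
      rintro ⟨w, hw⟩
      have hw' : w ∈ V ⊔ (ℝ ∙ x) := hw
      rcases Submodule.mem_sup.1 hw' with ⟨v, hv, z, hz, rfl⟩
      rcases Submodule.mem_span_singleton.1 hz with ⟨t, rfl⟩
      have happ : g ⟨v + t • x, hw⟩ = vs ⟨v, hv⟩ + t • ‖vs‖ :=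
        pf.supSpanSingleton_apply_mk x ‖vs‖ hxpf v hv t
      show ‖g ⟨v + t • x, hw⟩‖ ≤ _
      rw [happ, key v hv t]
      have h1 : ‖vs ⟨v, hv⟩‖ ≤ ‖vs‖ * ‖(⟨v, hv⟩ : V)‖ := vs.le_opNorm _
      have h2 : ‖(⟨v, hv⟩ : V)‖ = ‖v‖ := rfl
      calc ‖vs ⟨v, hv⟩ + t • ‖vs‖‖ ≤ ‖vs ⟨v, hv⟩‖ + ‖t • ‖vs‖‖ := norm_add_le _ _
        _ ≤ ‖vs‖ * ‖v‖ + |t| * ‖vs‖ := by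
            have h3 : ‖t • ‖vs‖‖ = |t| * ‖vs‖ := by
              rw [smul_eq_mul, Real.norm_eq_abs, abs_mul, abs_of_nonneg (norm_nonneg vs)]
            rw [h2] at h1
            rw [h3]
            linarith
        _ = ‖vs‖ * (‖v‖ + |t|) := by ring
    set f : g.domain →L[ℝ] ℝ := g.toFun.mkContinuous ‖vs‖ hbound with hf
    obtain ⟨xs, hext, hnorm⟩ := exists_extension_norm_eq g.domain f
    have hgmem : ∀ v ∈ V, v ∈ g.domain := by
      intro v hv
      exact Submodule.mem_sup_left hv
    have hxmem : x ∈ g.domain := Submodule.mem_sup_right (Submodule.mem_span_singleton_self x)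
    have hgV : ∀ v : V, g ⟨(v : X), hgmem v v.2⟩ = vs v := by
      intro v
      have : ((v : X) : X) = (v : X) + (0 : ℝ) • x := by simp
      have happ := pf.supSpanSingleton_apply_mk x ‖vs‖ hxpf (v : X) v.2 0
      have heq : (⟨(v : X), hgmem v v.2⟩ : g.domain) =
          ⟨(v : X) + (0 : ℝ) • x, Submodule.mem_sup.2
            ⟨(v : X), v.2, _, Submodule.mem_span_singleton.2 ⟨0, rfl⟩, rfl⟩⟩ := by
        ext; simp
      rw [heq]
      refine happ.trans ?_
      show vs ⟨(v : X), v.2⟩ + (0 : ℝ) • ‖vs‖ = vs v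
      simp
    have hgx : g ⟨x, hxmem⟩ = ‖vs‖ := by
      have happ := pf.supSpanSingleton_apply_mk x ‖vs‖ hxpf 0 V.zero_mem 1
      have heq : (⟨x, hxmem⟩ : g.domain) =
          ⟨(0 : X) + (1 : ℝ) • x, Submodule.mem_sup.2
            ⟨0, V.zero_mem, _, Submodule.mem_span_singleton.2 ⟨1, rfl⟩, rfl⟩⟩ := by
        ext; simp
      rw [heq]
      refine happ.trans ?_
      show vs 0 + (1 : ℝ) • ‖vs‖ = ‖vs‖
      simp
    have hextV : ∀ v : V, xs v = vs v := by
      intro v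
      have := hext ⟨(v : X), hgmem v v.2⟩
      rw [this]
      exact hgV v
    have hxsx : xs x = ‖vs‖ := by
      have := hext ⟨x, hxmem⟩
      rw [this]
      exact hgx
    refine ⟨xs, hextV, ?_, hxsx⟩
    -- ‖xs‖ = ‖vs‖
    have hle : ‖f‖ ≤ ‖vs‖ := g.toFun.mkContinuous_norm_le (norm_nonneg vs) hbound
    have hge : ‖vs‖ ≤ ‖xs‖ := by
      refine vs.opNorm_le_bound (norm_nonneg xs) fun v => ?_
      rw [← hextV v]
      exact xs.le_opNorm (v : X)
    rw [hnorm]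
    exact le_antisymm (le_trans (le_of_eq rfl) hle) (hnorm ▸ hge)
  · intro h v hv
    rcases eq_or_ne v 0 with rfl | hv0
    · simp [hx]
    · obtain ⟨vs, hvs1, hvsv⟩ := exists_dual_vector ℝ (⟨v, hv⟩ : V) (by simpa using hv0)
      obtain ⟨xs, hext, hnorm, hxsx⟩ := h vs
      have hge : ‖v‖ + 1 ≤ ‖v + x‖ := by
        have h1 : xs (v + x) = ‖v‖ + 1 := by
          rw [map_add, hext ⟨v, hv⟩, hvsv, hxsx, hvs1]
          norm_num
        calc ‖v‖ + 1 = xs (v + x) := h1.symm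
          _ ≤ ‖xs‖ * ‖v + x‖ := (le_abs_self _).trans (xs.le_opNorm _)
          _ = ‖v + x‖ := by rw [hnorm, hvs1, one_mul]
      have hle : ‖v + x‖ ≤ ‖v‖ + 1 := by
        calc ‖v + x‖ ≤ ‖v‖ + ‖x‖ := norm_add_le _ _
          _ = ‖v‖ + 1 := by rw [hx]
      linarith
end

section
/- Let X be a separable real Banach space and let V be a norming subset of the unit sphere S_X, i.e. ‖x*‖ = sup_{x ∈ V} x*(x) for every x* ∈ X*. Then the following are equivalent: (1) there exists a sequence {v_n} in V such that every weak-star cluster point v of {v_n} in the bidual ball B_{X**} (with respect to the topology σ(X**, X*), viewing the v_n in X** via the canonical embedding) satisfies ‖x + v‖ = ‖x‖ + 1 for every x ∈ X; (2) X has an octahedral norm; (3) whenever V ⊆ ⋃_{i=1}^n B(x_i, r_i) for finitely many points x_i ∈ B_X and radii r_i > 0, there exists i ∈ {1,…,n} such that B_X ⊆ B(x_i, r_i). -/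
open Filter Topology Metric

/-- A Banach space has an octahedral norm if for every finite-dimensional subspace `E`
and every `ε > 0` there is a norm-one vector `x` with
`‖e + λ x‖ ≥ (1-ε)(‖e‖ + |λ|)` for all `e ∈ E`, `λ ∈ ℝ`. -/
def OctahedralNorm (X : Type*) [NormedAddCommGroup X] [NormedSpace ℝ X] : Prop :=
  ∀ E : Submodule ℝ X, FiniteDimensional ℝ E → ∀ ε : ℝ, 0 < ε →
    ∃ x : X, ‖x‖ = 1 ∧ ∀ e ∈ E, ∀ l : ℝ, (1 - ε) * (‖e‖ + |l|) ≤ ‖e + l • x‖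

set_option linter.unusedSectionVars false
set_option linter.unusedTactic false
set_option maxHeartbeats 1000000

def octSeqAux {X : Type*} [Zero X] (pick : (ℕ → X) → ℕ → X) : ℕ → ℕ → X
  | 0 => fun _ => 0
  | n + 1 => Function.update (octSeqAux pick n) n (pick (octSeqAux pick n) n)

lemma octSeqAux_agree {X : Type*} [Zero X] (pick : (ℕ → X) → ℕ → X) :
    ∀ n i, i < n → octSeqAux pick n i = octSeqAux pick (i + 1) i := by
  intro n
  induction n with
  | zero => intro i h; omega
  | succ n ih =>
    intro i h
    rcases Nat.lt_succ_iff_lt_or_eq.1 h with h' | h'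
    · rw [octSeqAux, Function.update_of_ne (by omega : i ≠ n)]
      exact ih i h'
    · subst h'
      rfl

section OctAux
variable {X : Type*} [NormedAddCommGroup X] [NormedSpace ℝ X] {V : Set X}

-- L1
lemma oct_clusterPt_mem_closed {α : Type*} [TopologicalSpace α] {c : α} {s : ℕ → α}
    (h : MapClusterPt c atTop s) {S : Set α} (hS : IsClosed S) {N : ℕ}
    (hmem : ∀ n, N ≤ n → s n ∈ S) : c ∈ S := by
  have h1 : map s atTop ≤ 𝓟 S := le_principal_iff.2 (eventually_atTop.2 ⟨N, hmem⟩)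
  have h2 : ClusterPt c (𝓟 S) := ClusterPt.mono h h1
  rw [← hS.closure_eq]
  exact mem_closure_iff_clusterPt.2 h2

-- L2
lemma oct_exists_clusterPt_dual_ball {E : Type*} [NormedAddCommGroup E] [NormedSpace ℝ E]
    (s : ℕ → StrongDual ℝ E) (hs : ∀ n, ‖s n‖ ≤ 1) :
    ∃ g : StrongDual ℝ E, ‖g‖ ≤ 1 ∧
      MapClusterPt (StrongDual.toWeakDual g) atTop
        (fun n => StrongDual.toWeakDual (s n)) := by
  have hK := WeakDual.isCompact_closedBall (𝕜 := ℝ) (E := E) 0 1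
  have hle : map (fun n => StrongDual.toWeakDual (s n)) atTop ≤
      𝓟 (WeakDual.toStrongDual (𝕜 := ℝ) (E := E) ⁻¹' closedBall 0 1) := by
    simp only [Filter.le_principal_iff, Filter.mem_map]
    refine Eventually.of_forall fun n => ?_
    simp only [Set.mem_preimage, mem_closedBall, dist_zero_right]
    exact hs n
  obtain ⟨c, hc, hcl⟩ := hK.exists_clusterPt hle
  refine ⟨WeakDual.toStrongDual c, ?_, ?_⟩
  · simpa [dist_zero_right] using hc
  · have : StrongDual.toWeakDual (WeakDual.toStrongDual c) = c := rfl
    rw [this]; exact hcl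


-- L3
lemma oct_exists_dual_near {E : Type*} [NormedAddCommGroup E] [NormedSpace ℝ E]
    (w : E →L[ℝ] ℝ) {ε : ℝ} (hε : 0 < ε) : ∃ f : E, ‖f‖ ≤ 1 ∧ ‖w‖ - ε < w f := by
  rcases lt_or_ge (‖w‖ - ε) 0 with h | h
  · exact ⟨0, by simp, by simpa using h⟩
  · obtain ⟨x, hx, hx2⟩ := w.exists_lt_apply_of_lt_opNorm (r := ‖w‖ - ε) (by linarith)
    rcases le_or_gt 0 (w x) with h0 | h0
    · exact ⟨x, hx.le, by rwa [Real.norm_eq_abs, abs_of_nonneg h0] at hx2⟩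
    · refine ⟨-x, by simpa using hx.le, ?_⟩
      rw [map_neg]
      rwa [Real.norm_eq_abs, abs_of_neg h0] at hx2


lemma oct_exists_near_norm (hVnorming : ∀ f : X →L[ℝ] ℝ, ‖f‖ = sSup ((fun x => f x) '' V))
    (hne : V.Nonempty) (g : X →L[ℝ] ℝ) {ε : ℝ} (hε : 0 < ε) :
    ∃ v ∈ V, ‖g‖ - ε < g v := by
  have h1 : ‖g‖ - ε < sSup ((fun x => g x) '' V) := by rw [← hVnorming g]; linarith
  obtain ⟨a, ha, hlt⟩ := exists_lt_of_lt_csSup (hne.image _) h1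
  obtain ⟨v, hv, rfl⟩ := ha
  exact ⟨v, hv, hlt⟩


lemma oct_V_nonempty (hVnorming : ∀ f : X →L[ℝ] ℝ, ‖f‖ = sSup ((fun x => f x) '' V))
    {x0 : X} (hx0 : ‖x0‖ = 1) : V.Nonempty := by
  rw [Set.nonempty_iff_ne_empty]
  intro hV
  obtain ⟨f, hf1, hf2⟩ := exists_dual_vector ℝ x0 (by simp [← norm_pos_iff, hx0])
  have := hVnorming f
  rw [hV, Set.image_empty, Real.sSup_empty, hf1] at this
  norm_num at this


lemma oct_unit_of_oct (hoct : OctahedralNorm X) : ∃ x : X, ‖x‖ = 1 := by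
  obtain ⟨x, hx, -⟩ := hoct ⊥ inferInstance 1 one_pos
  exact ⟨x, hx⟩


-- (2) → (3)
lemma oct_two_to_three (hVsphere : ∀ x ∈ V, ‖x‖ = 1)
    (hVnorming : ∀ f : X →L[ℝ] ℝ, ‖f‖ = sSup ((fun x => f x) '' V))
    (hoct : OctahedralNorm X) :
    ∀ (n : ℕ) (c : Fin n → X) (r : Fin n → ℝ),
      (∀ i, ‖c i‖ ≤ 1) → (∀ i, 0 < r i) →
      (V ⊆ ⋃ i, closedBall (c i) (r i)) →
      ∃ i, closedBall (0 : X) 1 ⊆ closedBall (c i) (r i) := by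
  intro n c r hc hr hcover
  by_contra hno
  push_neg at hno
  obtain ⟨x0, hx0⟩ := oct_unit_of_oct hoct
  have hVne : V.Nonempty := oct_V_nonempty hVnorming hx0
  -- witnesses y i with ‖y i - c i‖ > r i
  have hy : ∀ i, ∃ y : X, ‖y‖ ≤ 1 ∧ r i < ‖y - c i‖ := by
    intro i
    obtain ⟨y, hy1, hy2⟩ := Set.not_subset.1 (hno i)
    refine ⟨y, by simpa [dist_zero_right] using hy1, ?_⟩
    simpa [mem_closedBall, dist_eq_norm, not_le] using hy2
  have hgap : ∀ i, r i < 1 + ‖c i‖ := by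
    intro i
    obtain ⟨y, hy1, hy2⟩ := hy i
    calc r i < ‖y - c i‖ := hy2
    _ ≤ ‖y‖ + ‖c i‖ := norm_sub_le _ _
    _ ≤ 1 + ‖c i‖ := by linarith
  rcases Nat.eq_zero_or_pos n with hn | hn
  · subst hn
    obtain ⟨v, hv⟩ := hVne
    have := hcover hv
    simp at this
  -- θ = min gap
  have hne' : (Finset.univ : Finset (Fin n)).Nonempty := by
    simpa [Finset.univ_nonempty_iff] using Fin.pos_iff_nonempty.1 hn
  set θ : ℝ := Finset.univ.inf' hne' (fun i => 1 + ‖c i‖ - r i) with hθdef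
  have hθpos : 0 < θ := by
    rw [hθdef]
    apply Finset.lt_inf'_iff _ |>.2
    intro i _
    linarith [hgap i]
  have hθle : ∀ i, θ ≤ 1 + ‖c i‖ - r i := fun i =>
    Finset.inf'_le _ (Finset.mem_univ i)
  set ε : ℝ := θ / (3 * n + 5) with hεdef
  have hεpos : 0 < ε := by positivity
  have hεsmall : (2 * n + 3 : ℝ) * ε < θ := by
    rw [hεdef, mul_div_assoc']
    have h1 : (2 * n + 3 : ℝ) / (3 * n + 5) < 1 := by
      rw [div_lt_one (by positivity)]
      have : (0:ℝ) ≤ n := Nat.cast_nonneg n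
      linarith
    calc (2 * n + 3 : ℝ) * θ / (3 * n + 5) = (2 * n + 3 : ℝ) / (3 * n + 5) * θ := by ring
    _ < 1 * θ := mul_lt_mul_of_pos_right h1 hθpos
    _ = θ := one_mul θ
  have hεquarter : ε < 1 / 4 := by
    have hθ2 : θ < 2 := by
      obtain ⟨i⟩ := Fin.pos_iff_nonempty.1 hn
      calc θ ≤ 1 + ‖c i‖ - r i := hθle i
      _ < 1 + 1 - 0 := by have := hc i; have := hr i; linarith
      _ = 2 := by norm_num
    have : (8:ℝ) ≤ 3 * n + 5 := by
      have : (1:ℝ) ≤ n := by exact_mod_cast hn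
      linarith
    rw [hεdef]
    rw [div_lt_iff₀ (by linarith : (0:ℝ) < 3 * n + 5)]
    nlinarith
  -- octahedral vector
  haveI : FiniteDimensional ℝ (Submodule.span ℝ (Set.range c)) :=
    FiniteDimensional.span_of_finite ℝ (Set.finite_range c)
  obtain ⟨z, hz1, hz2⟩ := hoct (Submodule.span ℝ (Set.range c)) inferInstance ε hεpos
  have hzc : ∀ i, 1 + ‖c i‖ - 2 * ε ≤ ‖z - c i‖ := by
    intro i
    have hmem : -c i ∈ Submodule.span ℝ (Set.range c) :=
      Submodule.neg_mem _ (Submodule.subset_span (Set.mem_range_self i))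
    have := hz2 (-c i) hmem 1
    rw [one_smul] at this
    have heq : -c i + z = z - c i := by abel
    rw [heq, norm_neg] at this
    have h2 : (1 - ε) * (‖c i‖ + |1|) = 1 + ‖c i‖ - ε * (1 + ‖c i‖) := by
      rw [abs_one]; ring
    rw [h2] at this
    have : ε * (1 + ‖c i‖) ≤ 2 * ε := by nlinarith [hc i, hεpos.le]
    linarith [hz2 (-c i) hmem 1]
  -- norming functionals
  have hf : ∀ i, ∃ f : X →L[ℝ] ℝ, ‖f‖ = 1 ∧ f (z - c i) = ‖z - c i‖ := by
    intro i
    apply exists_dual_vector ℝ (z - c i)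
    apply ne_of_gt
    have := hzc i
    have := norm_nonneg (c i)
    linarith
  choose f hf1 hf2 using hf
  have hfle : ∀ i (x : X), f i x ≤ ‖x‖ := by
    intro i x
    calc f i x ≤ |f i x| := le_abs_self _
    _ ≤ ‖f i‖ * ‖x‖ := by rw [← Real.norm_eq_abs]; exact (f i).le_opNorm x
    _ = ‖x‖ := by rw [hf1, one_mul]
  have hfge : ∀ i (x : X), -‖x‖ ≤ f i x := by
    intro i x
    have := hfle i (-x)
    rw [map_neg, norm_neg] at this
    linarith
  have hfz : ∀ i, 1 - 2 * ε ≤ f i z := by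
    intro i
    have h1 := hf2 i
    rw [map_sub] at h1
    have := hzc i
    have := hfge i (c i)
    linarith
  have hfc : ∀ i, f i (c i) ≤ -‖c i‖ + 2 * ε := by
    intro i
    have h1 := hf2 i
    rw [map_sub] at h1
    have h2 := hfle i z
    rw [hz1] at h2
    have := hzc i
    linarith
  set g : X →L[ℝ] ℝ := ∑ i, f i with hgdef
  have happ : ∀ x : X, g x = ∑ i, f i x := by
    intro x; rw [hgdef]; exact ContinuousLinearMap.sum_apply _ _ _
  have hgz : g z ≤ ‖g‖ := by
    calc g z ≤ |g z| := le_abs_self _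
    _ ≤ ‖g‖ * ‖z‖ := by rw [← Real.norm_eq_abs]; exact g.le_opNorm z
    _ = ‖g‖ := by rw [hz1, mul_one]
  obtain ⟨v, hvV, hgv⟩ := oct_exists_near_norm hVnorming hVne g hεpos
  have hvnorm : ‖v‖ = 1 := hVsphere v hvV
  have key : ∀ i, r i < ‖v - c i‖ := by
    intro i
    have h1 : ∀ j : Fin n, f j v ≤ 1 := by
      intro j; have := hfle j v; rwa [hvnorm] at this
    have hcard : (((Finset.univ : Finset (Fin n)).erase i).card : ℝ) = (n : ℝ) - 1 := by
      rw [Finset.card_erase_of_mem (Finset.mem_univ i), Finset.card_univ, Fintype.card_fin,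
        Nat.cast_sub hn, Nat.cast_one]
    have h2 : ∑ j ∈ Finset.univ.erase i, (f j v - f j z) ≤ ((n : ℝ) - 1) * (2 * ε) := by
      calc ∑ j ∈ Finset.univ.erase i, (f j v - f j z)
          ≤ ∑ _j ∈ Finset.univ.erase i, 2 * ε := by
            refine Finset.sum_le_sum fun j _ => ?_
            have := hfz j; have := h1 j; linarith
      _ = (((Finset.univ : Finset (Fin n)).erase i).card : ℝ) * (2 * ε) := by
            rw [Finset.sum_const, nsmul_eq_mul]
      _ = ((n : ℝ) - 1) * (2 * ε) := by rw [hcard]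
    have hsv : f i v + ∑ j ∈ Finset.univ.erase i, f j v = g v := by
      rw [happ]; exact Finset.add_sum_erase _ (fun j => f j v) (Finset.mem_univ i)
    have hsz : f i z + ∑ j ∈ Finset.univ.erase i, f j z = g z := by
      rw [happ]; exact Finset.add_sum_erase _ (fun j => f j z) (Finset.mem_univ i)
    have hsum2 : ∑ j ∈ Finset.univ.erase i, f j v - ∑ j ∈ Finset.univ.erase i, f j z
        ≤ ((n : ℝ) - 1) * (2 * ε) := by
      rw [← Finset.sum_sub_distrib]; exact h2
    have hfv : 1 - (2 * (n : ℝ) + 1) * ε ≤ f i v := by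
      have hz' := hfz i
      linarith [hgv, hgz, hsv, hsz, hsum2]
    have hfvc : r i < f i (v - c i) := by
      rw [map_sub]
      linarith [hfv, hfc i, hθle i, hεsmall]
    calc r i < f i (v - c i) := hfvc
    _ ≤ ‖v - c i‖ := hfle i _
  obtain ⟨i, hi⟩ := Set.mem_iUnion.1 (hcover hvV)
  rw [mem_closedBall, dist_eq_norm] at hi
  exact absurd hi (not_le.2 (key i))


-- (1) → (2)
lemma oct_one_to_two (hVsphere : ∀ x ∈ V, ‖x‖ = 1)
    (h1 : ∃ v : ℕ → X, (∀ n, v n ∈ V) ∧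
        ∀ u : StrongDual ℝ (StrongDual ℝ X), ‖u‖ ≤ 1 →
          MapClusterPt (StrongDual.toWeakDual u) atTop
            (fun n => StrongDual.toWeakDual
              (NormedSpace.inclusionInDoubleDual ℝ X (v n))) →
          ∀ x : X, ‖NormedSpace.inclusionInDoubleDual ℝ X x + u‖ = ‖x‖ + 1) :
    OctahedralNorm X := by
  obtain ⟨v, hvV, hu⟩ := h1
  have hJnorm : ∀ x : X, ‖NormedSpace.inclusionInDoubleDual ℝ X x‖ = ‖x‖ := fun x =>
    (NormedSpace.inclusionInDoubleDualLi ℝ (E := X)).norm_map x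
  obtain ⟨u, hu1, hucl⟩ := oct_exists_clusterPt_dual_ball (E := StrongDual ℝ X)
    (fun n => NormedSpace.inclusionInDoubleDual ℝ X (v n))
    (fun n => le_of_eq (by rw [hJnorm, hVsphere _ (hvV n)]))
  have hkey := hu u hu1 hucl
  intro E hE ε hε
  rcases lt_or_ge 1 ε with hbig | hε₁
  · refine ⟨v 0, hVsphere _ (hvV 0), fun e he l => ?_⟩
    have h2 : (1 - ε) * (‖e‖ + |l|) ≤ 0 :=
      mul_nonpos_of_nonpos_of_nonneg (by linarith) (by positivity)
    exact h2.trans (norm_nonneg _)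
  haveI : FiniteDimensional ℝ E := hE
  -- compact unit sphere of E inside X
  set S : Set X := (E : Set X) ∩ sphere 0 1 with hSdef
  have hScomp : IsCompact S := by
    have h2 : IsCompact (Subtype.val '' (sphere (0 : E) 1)) :=
      (isCompact_sphere (0 : E) 1).image continuous_subtype_val
    have h3 : S = Subtype.val '' (sphere (0 : E) 1) := by
      ext x
      constructor
      · rintro ⟨hxE, hxs⟩
        refine ⟨⟨x, hxE⟩, ?_, rfl⟩
        rw [mem_sphere_zero_iff_norm] at hxs ⊢
        simpa using hxs
      · rintro ⟨⟨y, hyE⟩, hys, rfl⟩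
        rw [mem_sphere_zero_iff_norm] at hys
        exact ⟨hyE, by rw [mem_sphere_zero_iff_norm]; simpa using hys⟩
    rw [h3]; exact h2
  have hε4 : 0 < ε / 4 := by linarith
  -- finite net
  obtain ⟨t, ht⟩ := hScomp.elim_finite_subcover (fun y : S => ball (y : X) (ε / 4))
    (fun y => isOpen_ball) (fun x hx => Set.mem_iUnion.2 ⟨⟨x, hx⟩, by simpa [mem_ball] using hε4⟩)
  -- functionals for net points
  have hfy : ∀ y : S, ∃ f : StrongDual ℝ X, ‖f‖ ≤ 1 ∧
      1 - ε / 4 < f (y : X) ∧ 1 - ε / 4 < u f := by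
    intro y
    have hy1 : ‖(y : X)‖ = 1 := by
      have := y.2.2; rwa [mem_sphere_zero_iff_norm] at this
    have hnorm2 : ‖NormedSpace.inclusionInDoubleDual ℝ X (y : X) + u‖ = 2 := by
      rw [hkey (y : X), hy1]; norm_num
    obtain ⟨f, hf1, hf2⟩ :=
      oct_exists_dual_near (NormedSpace.inclusionInDoubleDual ℝ X (y : X) + u) hε4
    rw [hnorm2] at hf2
    have happ : (NormedSpace.inclusionInDoubleDual ℝ X (y : X) + u) f = f (y : X) + u f := by
      rw [ContinuousLinearMap.add_apply, NormedSpace.dual_def]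
    rw [happ] at hf2
    have hfyle : f (y : X) ≤ 1 := by
      calc f (y : X) ≤ |f (y : X)| := le_abs_self _
      _ ≤ ‖f‖ * ‖(y : X)‖ := by rw [← Real.norm_eq_abs]; exact f.le_opNorm _
      _ ≤ 1 := by rw [hy1, mul_one]; exact hf1
    have hufle : u f ≤ 1 := by
      calc u f ≤ |u f| := le_abs_self _
      _ ≤ ‖u‖ * ‖f‖ := by rw [← Real.norm_eq_abs]; exact u.le_opNorm _
      _ ≤ 1 := by nlinarith [norm_nonneg u, norm_nonneg f]
    exact ⟨f, hf1, by linarith, by linarith⟩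
  choose F hF1 hF2 hF3 using hfy
  -- neighborhood and cluster point
  set U : Set (WeakDual ℝ (StrongDual ℝ X)) :=
    ⋂ y ∈ t, (fun w : WeakDual ℝ (StrongDual ℝ X) => w (F y)) ⁻¹' Set.Ioi (1 - ε / 2)
    with hUdef
  have hUopen : IsOpen U := by
    rw [hUdef]
    exact isOpen_biInter_finset fun y _ =>
      (WeakDual.eval_continuous (F y)).isOpen_preimage _ isOpen_Ioi
  have hUmem : StrongDual.toWeakDual u ∈ U := by
    rw [hUdef]
    refine Set.mem_iInter₂.2 fun y _ => ?_
    have := hF3 y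
    simp only [Set.mem_preimage, Set.mem_Ioi]
    show 1 - ε / 2 < u (F y)
    linarith
  obtain ⟨n, hn⟩ := (mapClusterPt_iff_frequently.1 hucl U (hUopen.mem_nhds hUmem)).exists
  have hvn : ∀ y ∈ t, 1 - ε / 2 < F y (v n) := by
    intro y hy
    have := Set.mem_iInter₂.1 hn y hy
    simpa [NormedSpace.dual_def] using this
  refine ⟨v n, hVsphere _ (hvV n), ?_⟩
  -- claim for unit vectors of E
  have claimA : ∀ w ∈ S, ∀ μ : ℝ, 0 ≤ μ → (1 - ε) * (1 + μ) ≤ ‖w + μ • v n‖ := by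
    intro w hw μ hμ
    obtain ⟨y, hyt, hwy⟩ := Set.mem_iUnion₂.1 (ht hw)
    rw [mem_ball, dist_eq_norm] at hwy
    have hFyw : 1 - ε / 2 ≤ F y w := by
      have h2 : F y w = F y (y : X) - F y ((y : X) - w) := by rw [map_sub]; ring
      have h3 : F y ((y : X) - w) ≤ ε / 4 := by
        calc F y ((y : X) - w) ≤ |F y ((y : X) - w)| := le_abs_self _
        _ ≤ ‖F y‖ * ‖(y : X) - w‖ := by rw [← Real.norm_eq_abs]; exact (F y).le_opNorm _
        _ ≤ 1 * (ε / 4) := by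
            apply mul_le_mul (hF1 y) _ (norm_nonneg _) zero_le_one
            rw [← norm_neg]; simpa [neg_sub] using hwy.le
        _ = ε / 4 := one_mul _
      have := hF2 y
      linarith
    have hFvn : 1 - ε / 2 ≤ F y (v n) := (hvn y hyt).le
    have hbound : F y (w + μ • v n) ≤ ‖w + μ • v n‖ := by
      calc F y (w + μ • v n) ≤ |F y (w + μ • v n)| := le_abs_self _
      _ ≤ ‖F y‖ * ‖w + μ • v n‖ := by rw [← Real.norm_eq_abs]; exact (F y).le_opNorm _
      _ ≤ 1 * ‖w + μ • v n‖ := by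
          exact mul_le_mul_of_nonneg_right (hF1 y) (norm_nonneg _)
      _ = ‖w + μ • v n‖ := one_mul _
    have happ2 : F y (w + μ • v n) = F y w + μ * F y (v n) := by
      rw [map_add, map_smul]; rfl
    have : (1 - ε) * (1 + μ) ≤ (1 - ε / 2) + μ * (1 - ε / 2) := by nlinarith
    have h5 : μ * (1 - ε / 2) ≤ μ * F y (v n) := mul_le_mul_of_nonneg_left hFvn hμ
    linarith [hbound, happ2.symm.le]
  -- general case
  intro e he l
  by_cases he0 : e = 0
  · subst he0
    rw [zero_add, norm_smul, hVsphere _ (hvV n), mul_one, norm_zero, zero_add,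
      Real.norm_eq_abs]
    nlinarith [abs_nonneg l]
  · have ha : 0 < ‖e‖ := norm_pos_iff.2 he0
    have hmemS : ∀ s : ℝ, s = 1 ∨ s = -1 → (s * ‖e‖⁻¹) • e ∈ S := by
      intro s hs
      constructor
      · exact Submodule.smul_mem E _ he
      · rw [mem_sphere_zero_iff_norm, norm_smul, Real.norm_eq_abs, abs_mul, abs_inv,
          abs_norm]
        rcases hs with h | h <;> rw [h] <;> field_simp <;> simp
    rcases le_or_gt 0 l with hl | hl
    · have h6 := claimA (((1:ℝ) * ‖e‖⁻¹) • e) (hmemS 1 (Or.inl rfl)) (l / ‖e‖)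
        (div_nonneg hl ha.le)
      rw [one_mul] at h6
      have hinner : e + l • v n = ‖e‖ • (‖e‖⁻¹ • e + (l / ‖e‖) • v n) := by
        rw [smul_add, smul_inv_smul₀ ha.ne', smul_smul]
        congr 2
        field_simp
      have heq : ‖e + l • v n‖ = ‖e‖ * ‖‖e‖⁻¹ • e + (l / ‖e‖) • v n‖ := by
        rw [hinner, norm_smul, Real.norm_eq_abs, abs_of_pos ha]
      have habs : |l| = l := abs_of_nonneg hl
      have h10 : (1 - ε) * (‖e‖ + |l|) = ‖e‖ * ((1 - ε) * (1 + l / ‖e‖)) := by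
        rw [habs]
        field_simp
      rw [h10, heq]
      exact mul_le_mul_of_nonneg_left h6 ha.le
    · have h6 := claimA ((((-1):ℝ) * ‖e‖⁻¹) • e) (hmemS (-1) (Or.inr rfl)) ((-l) / ‖e‖)
        (div_nonneg (by linarith) ha.le)
      have h7 : ‖e‖ * ((-1) * ‖e‖⁻¹) = -1 := by field_simp
      have h8 : ‖e‖ * (-l / ‖e‖) = -l := by field_simp
      have hinner : e + l • v n = -(‖e‖ • (((-1) * ‖e‖⁻¹) • e + (-l / ‖e‖) • v n)) := by
        rw [smul_add, smul_smul, smul_smul, h7, h8]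
        module
      have heq : ‖e + l • v n‖ = ‖e‖ * ‖((-1) * ‖e‖⁻¹) • e + (-l / ‖e‖) • v n‖ := by
        rw [hinner, norm_neg, norm_smul, Real.norm_eq_abs, abs_of_pos ha]
      have habs : |l| = -l := abs_of_neg hl
      have h10 : (1 - ε) * (‖e‖ + |l|) = ‖e‖ * ((1 - ε) * (1 + -l / ‖e‖)) := by
        rw [habs]
        field_simp
      rw [h10, heq]
      exact mul_le_mul_of_nonneg_left h6 ha.le

-- (3) → claim C
lemma oct_three_to_claimC (hVsphere : ∀ x ∈ V, ‖x‖ = 1)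
    (h3 : ∀ (n : ℕ) (c : Fin n → X) (r : Fin n → ℝ),
      (∀ i, ‖c i‖ ≤ 1) → (∀ i, 0 < r i) →
      (V ⊆ ⋃ i, closedBall (c i) (r i)) →
      ∃ i, closedBall (0 : X) 1 ⊆ closedBall (c i) (r i)) :
    ∀ (F : Finset X) (δ : ℝ), 0 < δ →
      ∃ v, v ∈ V ∧ ‖v‖ = 1 ∧ ∀ e ∈ F, ‖e‖ + 1 - δ ≤ ‖e + v‖ := by
  classical
  have hVne : V.Nonempty := by
    rw [Set.nonempty_iff_ne_empty]
    intro hV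
    obtain ⟨i, -⟩ := h3 0 (fun _ => 0) (fun _ => 1) (fun i => i.elim0) (fun i => i.elim0)
      (by simp [hV])
    exact i.elim0
  obtain ⟨v0, hv0⟩ := hVne
  have hv0n : ‖v0‖ = 1 := hVsphere v0 hv0
  intro F δ hδ
  set n := F.card with hn
  set a : Fin n → X := fun i => (F.equivFin.symm i : X) with ha
  set εe : X → ℝ := fun e => min (δ / (‖e‖ + 2)) (1 / 2) with hεe
  have hεepos : ∀ e : X, 0 < εe e := by
    intro e
    apply lt_min
    · apply div_pos hδ; positivity
    · norm_num
  have hεele : ∀ e : X, (‖e‖ + 2) * εe e ≤ δ := by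
    intro e
    have h1 : εe e ≤ δ / (‖e‖ + 2) := min_le_left _ _
    rw [mul_comm, ← le_div_iff₀ (by positivity)]
    exact h1
  set c : Fin n → X := fun i => -((‖a i‖ + 1)⁻¹ • a i) with hc
  set r : Fin n → ℝ := fun i => 1 + ‖a i‖ / (‖a i‖ + 1) - εe (a i) with hr
  have hapos : ∀ i, (0:ℝ) < ‖a i‖ + 1 := fun i => by positivity
  have hcnorm : ∀ i, ‖c i‖ ≤ 1 := by
    intro i
    rw [hc]
    simp only [norm_neg, norm_smul, Real.norm_eq_abs, abs_inv, abs_of_pos (hapos i)]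
    rw [inv_mul_le_iff₀ (hapos i)]
    nlinarith [norm_nonneg (a i)]
  have hrpos : ∀ i, 0 < r i := by
    intro i
    rw [hr]
    have h1 : εe (a i) ≤ 1 / 2 := min_le_right _ _
    have h2 : 0 ≤ ‖a i‖ / (‖a i‖ + 1) := by positivity
    simp only
    linarith
  have hnotsub : ∀ i, ¬ closedBall (0 : X) 1 ⊆ closedBall (c i) (r i) := by
    intro i hsub
    by_cases h0 : a i = 0
    · have h1 : v0 ∈ closedBall (0 : X) 1 := by
        rw [mem_closedBall, dist_zero_right, hv0n]
      have h2 := hsub h1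
      rw [mem_closedBall, hc, hr] at h2
      simp only [h0, norm_zero, smul_zero, neg_zero, dist_zero_right, hv0n, zero_div,
        add_zero, zero_add] at h2
      linarith [hεepos (0 : X)]
    · set y : X := ‖a i‖⁻¹ • a i with hy
      have hyn : ‖y‖ = 1 := by
        rw [hy, norm_smul, Real.norm_eq_abs, abs_inv, abs_norm,
          inv_mul_cancel₀ (norm_ne_zero_iff.2 h0)]
      have h1 : y ∈ closedBall (0 : X) 1 := by rw [mem_closedBall, dist_zero_right, hyn]
      have h2 := hsub h1
      rw [mem_closedBall, dist_eq_norm, hc, sub_neg_eq_add, hy] at h2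
      have h3 : ‖a i‖⁻¹ • a i + (‖a i‖ + 1)⁻¹ • a i
          = (‖a i‖⁻¹ + (‖a i‖ + 1)⁻¹) • a i := by rw [add_smul]
      rw [h3, norm_smul, Real.norm_eq_abs] at h2
      have hne : ‖a i‖ ≠ 0 := norm_ne_zero_iff.2 h0
      have h4 : |‖a i‖⁻¹ + (‖a i‖ + 1)⁻¹| * ‖a i‖ = 1 + ‖a i‖ / (‖a i‖ + 1) := by
        rw [abs_of_pos (by positivity)]
        field_simp
      rw [h4, hr] at h2
      simp only at h2
      linarith [hεepos (a i)]
  have hnotcover : ¬ V ⊆ ⋃ i, closedBall (c i) (r i) := by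
    intro hcov
    obtain ⟨i, hi⟩ := h3 n c r hcnorm hrpos hcov
    exact hnotsub i hi
  obtain ⟨v, hvV, hvout⟩ := Set.not_subset.1 hnotcover
  have hvn : ‖v‖ = 1 := hVsphere v hvV
  refine ⟨v, hvV, hvn, ?_⟩
  intro e heF
  -- e = a i for some i
  obtain ⟨i, hi⟩ : ∃ i, a i = e := ⟨F.equivFin ⟨e, heF⟩, by rw [ha]; simp⟩
  have hout : r i < ‖v - c i‖ := by
    by_contra hle
    exact hvout (Set.mem_iUnion.2 ⟨i, by rw [mem_closedBall, dist_eq_norm]; linarith⟩)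
  rw [hc, sub_neg_eq_add] at hout
  set A : ℝ := ‖a i‖ + 1 with hA
  have hApos : (0:ℝ) < A := hapos i
  -- Hahn-Banach on w = v + A⁻¹ • a i
  have hwpos : 0 < ‖v + A⁻¹ • a i‖ := by
    have h1 : εe (a i) ≤ 1 / 2 := min_le_right _ _
    have h2 : 0 ≤ ‖a i‖ / (‖a i‖ + 1) := by positivity
    rw [hr] at hout
    simp only at hout
    linarith
  obtain ⟨f, hf1, hf2⟩ := exists_dual_vector ℝ _ hwpos.ne'
  have hfle : ∀ x : X, f x ≤ ‖x‖ := by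
    intro x
    calc f x ≤ |f x| := le_abs_self _
    _ ≤ ‖f‖ * ‖x‖ := by rw [← Real.norm_eq_abs]; exact f.le_opNorm x
    _ = ‖x‖ := by rw [hf1, one_mul]
  have happ : f (v + A⁻¹ • a i) = f v + A⁻¹ * f (a i) := by
    rw [map_add, map_smul]; rfl
  have hval : 1 + ‖a i‖ / A - εe (a i) < f v + A⁻¹ * f (a i) := by
    rw [← happ, hf2]
    rw [hr] at hout
    exact hout
  have hfv : f v ≤ 1 := by rw [← hvn]; exact hfle v
  have hfa : f (a i) ≤ ‖a i‖ := hfle (a i)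
  have hfainv : A⁻¹ * f (a i) ≤ ‖a i‖ / A := by
    rw [div_eq_inv_mul]
    exact mul_le_mul_of_nonneg_left hfa (by positivity)
  -- lower bounds
  have hfv' : 1 - εe (a i) < f v := by linarith
  have hfa' : ‖a i‖ - A * εe (a i) < f (a i) := by
    have h5 : ‖a i‖ / A - εe (a i) < A⁻¹ * f (a i) := by linarith
    have h6 : A * (‖a i‖ / A - εe (a i)) < A * (A⁻¹ * f (a i)) :=
      mul_lt_mul_of_pos_left h5 hApos
    rw [← mul_assoc, mul_inv_cancel₀ hApos.ne', one_mul, mul_sub] at h6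
    have h6' : A * (‖a i‖ / A) = ‖a i‖ := by field_simp
    rw [h6'] at h6
    exact h6
  have hsum : ‖a i‖ + 1 - δ ≤ f (a i) + f v := by
    have h9 : (‖a i‖ + 2) * εe (a i) = A * εe (a i) + εe (a i) := by rw [hA]; ring
    linarith [hεele (a i), hfa', hfv']
  calc ‖e‖ + 1 - δ = ‖a i‖ + 1 - δ := by rw [hi]
  _ ≤ f (a i) + f v := hsum
  _ = f (a i + v) := by rw [map_add]
  _ ≤ ‖a i + v‖ := hfle _
  _ = ‖e + v‖ := by rw [hi]

lemma oct_build
    (hC : ∀ (F : Finset X) (δ : ℝ), 0 < δ →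
      ∃ v, v ∈ V ∧ ‖v‖ = 1 ∧ ∀ e ∈ F, ‖e‖ + 1 - δ ≤ ‖e + v‖) (D : ℕ → X) :
    ∃ v : ℕ → X, (∀ n, v n ∈ V ∧ ‖v n‖ = 1) ∧
      ∀ n, ∀ i ≤ n, ‖D i + ∑ j ∈ Finset.Ico i n, v j‖ + 1 - (1/2:ℝ)^n
        ≤ ‖(D i + ∑ j ∈ Finset.Ico i n, v j) + v n‖ := by
  classical
  have hpos : ∀ n : ℕ, (0:ℝ) < (1/2:ℝ)^n := fun n => by positivity
  set pick : (ℕ → X) → ℕ → X := fun f n =>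
    (hC ((Finset.range (n+1)).image fun i => D i + ∑ j ∈ Finset.Ico i n, f j)
      ((1/2:ℝ)^n) (hpos n)).choose with hpick
  have hspec : ∀ (f : ℕ → X) (n : ℕ), pick f n ∈ V ∧ ‖pick f n‖ = 1 ∧
      ∀ e ∈ (Finset.range (n+1)).image fun i => D i + ∑ j ∈ Finset.Ico i n, f j,
        ‖e‖ + 1 - (1/2:ℝ)^n ≤ ‖e + pick f n‖ := fun f n =>
    (hC ((Finset.range (n+1)).image fun i => D i + ∑ j ∈ Finset.Ico i n, f j)
      ((1/2:ℝ)^n) (hpos n)).choose_spec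
  refine ⟨fun n => pick (octSeqAux pick n) n, fun n => ⟨(hspec _ n).1, (hspec _ n).2.1⟩, ?_⟩
  intro n i hi
  have hsum : ∑ j ∈ Finset.Ico i n, octSeqAux pick n j
      = ∑ j ∈ Finset.Ico i n, pick (octSeqAux pick j) j := by
    apply Finset.sum_congr rfl
    intro j hj
    rw [Finset.mem_Ico] at hj
    rw [octSeqAux_agree pick n j hj.2]
    rw [octSeqAux, Function.update_self]
  have hmem : (D i + ∑ j ∈ Finset.Ico i n, pick (octSeqAux pick j) j)
      ∈ (Finset.range (n+1)).image fun i' => D i' + ∑ j ∈ Finset.Ico i' n, octSeqAux pick n j := by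
    apply Finset.mem_image.2
    exact ⟨i, Finset.mem_range.2 (by omega), by rw [hsum]⟩
  exact (hspec (octSeqAux pick n) n).2.2 _ hmem

-- (3) → (1), given claim C
lemma oct_claimC_to_one [TopologicalSpace.SeparableSpace X]
    (hC : ∀ (F : Finset X) (δ : ℝ), 0 < δ →
      ∃ v, v ∈ V ∧ ‖v‖ = 1 ∧ ∀ e ∈ F, ‖e‖ + 1 - δ ≤ ‖e + v‖) :
    ∃ v : ℕ → X, (∀ n, v n ∈ V) ∧
      ∀ u : StrongDual ℝ (StrongDual ℝ X), ‖u‖ ≤ 1 →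
        MapClusterPt (StrongDual.toWeakDual u) atTop
          (fun n => StrongDual.toWeakDual
            (NormedSpace.inclusionInDoubleDual ℝ X (v n))) →
        ∀ x : X, ‖NormedSpace.inclusionInDoubleDual ℝ X x + u‖ = ‖x‖ + 1 := by
  classical
  have : Nonempty X := ⟨0⟩
  obtain ⟨d, hd⟩ := TopologicalSpace.exists_dense_seq X
  set D : ℕ → X := fun i => d (Nat.unpair i).1 with hD
  obtain ⟨v, hv, hkey⟩ := oct_build hC D
  -- telescoping
  have tele : ∀ i k : ℕ, ‖D i‖ + (k:ℝ) - 2*(1/2:ℝ)^i + 2*(1/2:ℝ)^(i+k)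
      ≤ ‖D i + ∑ j ∈ Finset.Ico i (i+k), v j‖ := by
    intro i k
    induction k with
    | zero => simp
    | succ k ih =>
      have h2 : ∑ j ∈ Finset.Ico i (i+(k+1)), v j
          = (∑ j ∈ Finset.Ico i (i+k), v j) + v (i+k) := by
        rw [show i+(k+1) = (i+k)+1 from rfl]
        exact Finset.sum_Ico_succ_top (by omega) v
      have h3 := hkey (i+k) i (by omega)
      have heq : ‖D i + ∑ j ∈ Finset.Ico i (i+(k+1)), v j‖
          = ‖(D i + ∑ j ∈ Finset.Ico i (i+k), v j) + v (i+k)‖ := by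
        rw [h2, add_assoc]
      rw [heq]
      have h4 : (1/2:ℝ)^(i+(k+1)) = (1/2:ℝ)^(i+k) * (1/2) := pow_succ _ _
      have h6 : (0:ℝ) < (1/2:ℝ)^(i+k) := by positivity
      push_cast
      linarith
  -- the tail functional property
  have star : ∀ i : ℕ, ∃ g : StrongDual ℝ X, ‖g‖ ≤ 1 ∧
      ‖D i‖ - 2*(1/2:ℝ)^i ≤ g (D i) ∧ ∀ j, i ≤ j → 1 - 2*(1/2:ℝ)^i ≤ g (v j) := by
    intro i
    set T : ℕ → X := fun m => D i + ∑ j ∈ Finset.Ico i (i+(m+4)), v j with hT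
    have hTnorm : ∀ m : ℕ, ‖D i‖ + (m:ℝ) + 4 - 2*(1/2:ℝ)^i ≤ ‖T m‖ := by
      intro m
      have h5 := tele i (m+4)
      have h6 : (0:ℝ) < (1/2:ℝ)^(i+(m+4)) := by positivity
      push_cast at h5
      linarith
    have hTpos : ∀ m : ℕ, 0 < ‖T m‖ := by
      intro m
      have h8 := hTnorm m
      have h7 : (1/2:ℝ)^i ≤ 1 := pow_le_one₀ (by norm_num) (by norm_num)
      have h9 : (0:ℝ) ≤ (m:ℝ) := Nat.cast_nonneg m
      have h10 : (0:ℝ) ≤ ‖D i‖ := norm_nonneg (D i)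
      linarith
    have hg : ∀ m : ℕ, ∃ g : X →L[ℝ] ℝ, ‖g‖ = 1 ∧ g (T m) = ‖T m‖ :=
      fun m => exists_dual_vector ℝ (T m) (hTpos m).ne'
    choose g hg1 hg2 using hg
    have hgle : ∀ m (x : X), g m x ≤ ‖x‖ := by
      intro m x
      calc g m x ≤ |g m x| := le_abs_self _
      _ ≤ ‖g m‖ * ‖x‖ := by rw [← Real.norm_eq_abs]; exact (g m).le_opNorm x
      _ = ‖x‖ := by rw [hg1, one_mul]
    have hcard : ∀ m : ℕ, (Finset.Ico i (i+(m+4))).card = m + 4 := by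
      intro m; rw [Nat.card_Ico]; omega
    have hsumnorm : ∀ m : ℕ, ‖∑ j ∈ Finset.Ico i (i+(m+4)), v j‖ ≤ (m:ℝ) + 4 := by
      intro m
      calc ‖∑ j ∈ Finset.Ico i (i+(m+4)), v j‖ ≤ ∑ j ∈ Finset.Ico i (i+(m+4)), ‖v j‖ :=
            norm_sum_le _ _
      _ = ∑ j ∈ Finset.Ico i (i+(m+4)), 1 := by
            apply Finset.sum_congr rfl; intro j _; rw [(hv j).2]
      _ = ((m:ℝ) + 4) := by rw [Finset.sum_const, hcard]; push_cast; ring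
    -- g m (D i) bound
    have hgD : ∀ m : ℕ, ‖D i‖ - 2*(1/2:ℝ)^i ≤ g m (D i) := by
      intro m
      have h1 : g m (D i) = g m (T m) - g m (∑ j ∈ Finset.Ico i (i+(m+4)), v j) := by
        rw [← map_sub]; congr 1; simp only [hT]; abel
      rw [h1, hg2]
      have h2 := hgle m (∑ j ∈ Finset.Ico i (i+(m+4)), v j)
      have h3 := hsumnorm m
      have h4 := hTnorm m
      linarith
    -- g m (v j) bound for j in window
    have hgv : ∀ m j : ℕ, i ≤ j → j < i + (m+4) → 1 - 2*(1/2:ℝ)^i ≤ g m (v j) := by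
      intro m j hij hjm
      have hjmem : j ∈ Finset.Ico i (i+(m+4)) := Finset.mem_Ico.2 ⟨hij, hjm⟩
      have h1 : g m (v j) = g m (T m) - g m (T m - v j) := by rw [map_sub]; ring
      have h3 : ∑ j' ∈ Finset.Ico i (i+(m+4)), v j'
          = v j + ∑ j' ∈ (Finset.Ico i (i+(m+4))).erase j, v j' :=
        (Finset.add_sum_erase _ v hjmem).symm
      have h2 : T m - v j = D i + ∑ j' ∈ (Finset.Ico i (i+(m+4))).erase j, v j' := by
        simp only [hT]
        rw [h3]
        abel
      have h4 : ‖T m - v j‖ ≤ ‖D i‖ + ((m:ℝ) + 3) := by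
        rw [h2]
        calc ‖D i + ∑ j' ∈ (Finset.Ico i (i+(m+4))).erase j, v j'‖
            ≤ ‖D i‖ + ‖∑ j' ∈ (Finset.Ico i (i+(m+4))).erase j, v j'‖ := norm_add_le _ _
        _ ≤ ‖D i‖ + ((m:ℝ) + 3) := by
            have h5 : ‖∑ j' ∈ (Finset.Ico i (i+(m+4))).erase j, v j'‖ ≤ (m:ℝ) + 3 := by
              calc ‖∑ j' ∈ (Finset.Ico i (i+(m+4))).erase j, v j'‖
                  ≤ ∑ j' ∈ (Finset.Ico i (i+(m+4))).erase j, ‖v j'‖ := norm_sum_le _ _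
              _ = ∑ j' ∈ (Finset.Ico i (i+(m+4))).erase j, 1 := by
                  apply Finset.sum_congr rfl; intro j' _; rw [(hv j').2]
              _ = ((m:ℝ) + 3) := by
                  rw [Finset.sum_const, Finset.card_erase_of_mem hjmem, hcard]
                  push_cast; norm_num
            linarith
      rw [h1, hg2]
      have h6 := hgle m (T m - v j)
      have h7 := hTnorm m
      linarith
    -- cluster point of the g m
    obtain ⟨G, hG1, hGcl⟩ := oct_exists_clusterPt_dual_ball (E := X) g
      (fun m => le_of_eq (hg1 m))
    refine ⟨G, hG1, ?_, ?_⟩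
    · have hclosed : IsClosed {w : WeakDual ℝ X | ‖D i‖ - 2*(1/2:ℝ)^i ≤ w (D i)} :=
        isClosed_le continuous_const (WeakDual.eval_continuous (D i))
      exact oct_clusterPt_mem_closed hGcl hclosed (N := 0)
        (fun m _ => hgD m)
    · intro j hij
      have hclosed : IsClosed {w : WeakDual ℝ X | 1 - 2*(1/2:ℝ)^i ≤ w (v j)} :=
        isClosed_le continuous_const (WeakDual.eval_continuous (v j))
      exact oct_clusterPt_mem_closed hGcl hclosed (N := j)
        (fun m hm => hgv m j hij (by omega))
  -- conclusion
  refine ⟨v, fun n => (hv n).1, ?_⟩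
  intro u hu1 hucl x
  have hJnorm : ∀ y : X, ‖NormedSpace.inclusionInDoubleDual ℝ X y‖ = ‖y‖ := fun y =>
    (NormedSpace.inclusionInDoubleDualLi ℝ (E := X)).norm_map y
  apply le_antisymm
  · calc ‖NormedSpace.inclusionInDoubleDual ℝ X x + u‖
        ≤ ‖NormedSpace.inclusionInDoubleDual ℝ X x‖ + ‖u‖ :=
          norm_add_le (NormedSpace.inclusionInDoubleDual ℝ X x) u
    _ ≤ ‖x‖ + 1 := by rw [hJnorm]; linarith
  · by_contra hlt
    push_neg at hlt
    set ε : ℝ := (‖x‖ + 1 - ‖NormedSpace.inclusionInDoubleDual ℝ X x + u‖) / 4 with hε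
    have hεpos : 0 < ε := by rw [hε]; linarith
    -- find i with D i close to x and 2*(1/2)^i < ε
    obtain ⟨k, hk⟩ : ∃ k, dist x (d k) < ε := by
      have hx : x ∈ closure (Set.range d) := by rw [hd.closure_range]; trivial
      obtain ⟨y, hy1, hy2⟩ := Metric.mem_closure_iff.1 hx ε hεpos
      obtain ⟨k, rfl⟩ := hy1
      exact ⟨k, hy2⟩
    obtain ⟨N, hN⟩ : ∃ N : ℕ, (1/2:ℝ)^N < ε/2 := exists_pow_lt_of_lt_one (by linarith)
      (by norm_num)
    set i : ℕ := Nat.pair k N with hi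
    have hDi : D i = d k := by rw [hD, hi]; simp
    have hpow : 2*(1/2:ℝ)^i < ε := by
      have h1 : (1/2:ℝ)^i ≤ (1/2:ℝ)^N := by
        apply pow_le_pow_of_le_one (by norm_num) (by norm_num)
        rw [hi]; exact Nat.right_le_pair k N
      linarith
    have hdist : ‖x - D i‖ < ε := by rw [hDi, ← dist_eq_norm]; exact hk
    obtain ⟨g, hg1, hgD, hgv⟩ := star i
    -- u g bound
    have hug : 1 - 2*(1/2:ℝ)^i ≤ u g := by
      have hclosed : IsClosed {w : WeakDual ℝ (StrongDual ℝ X) | 1 - 2*(1/2:ℝ)^i ≤ w g} :=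
        isClosed_le continuous_const (WeakDual.eval_continuous g)
      have hmem : ∀ n, i ≤ n →
          (StrongDual.toWeakDual (NormedSpace.inclusionInDoubleDual ℝ X (v n))) ∈
            {w : WeakDual ℝ (StrongDual ℝ X) | 1 - 2*(1/2:ℝ)^i ≤ w g} := by
        intro n hn
        show 1 - 2*(1/2:ℝ)^i ≤ NormedSpace.inclusionInDoubleDual ℝ X (v n) g
        rw [NormedSpace.dual_def]
        exact hgv n hn
      exact oct_clusterPt_mem_closed hucl hclosed hmem
    -- g x bound
    have hgx : ‖x‖ - ε - 2*(1/2:ℝ)^i - ε ≤ g x := by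
      have h1 : g x = g (D i) + g (x - D i) := by rw [map_sub]; ring
      have h2 : -‖x - D i‖ ≤ g (x - D i) := by
        have h3 : g (D i - x) ≤ ‖D i - x‖ := by
          calc g (D i - x) ≤ |g (D i - x)| := le_abs_self _
          _ ≤ ‖g‖ * ‖D i - x‖ := by rw [← Real.norm_eq_abs]; exact g.le_opNorm _
          _ ≤ ‖D i - x‖ := by
              nlinarith [norm_nonneg (D i - x), hg1]
        have h4 : g (D i - x) = - g (x - D i) := by rw [← map_neg]; congr 1; abel
        rw [h4] at h3
        rw [← norm_neg, show -(x - D i) = D i - x by abel]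
        linarith
      have h5 : ‖D i‖ ≥ ‖x‖ - ε := by
        have := norm_sub_norm_le x (D i)
        linarith [hdist]
      linarith [hgD, hdist]
    -- final contradiction
    have hfinal : (NormedSpace.inclusionInDoubleDual ℝ X x + u) g
        ≤ ‖NormedSpace.inclusionInDoubleDual ℝ X x + u‖ := by
      calc (NormedSpace.inclusionInDoubleDual ℝ X x + u) g
          ≤ |(NormedSpace.inclusionInDoubleDual ℝ X x + u) g| := le_abs_self _
      _ ≤ ‖NormedSpace.inclusionInDoubleDual ℝ X x + u‖ * ‖g‖ := by
          rw [← Real.norm_eq_abs]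
          exact (NormedSpace.inclusionInDoubleDual ℝ X x + u).le_opNorm g
      _ ≤ ‖NormedSpace.inclusionInDoubleDual ℝ X x + u‖ := by
          nlinarith [norm_nonneg (NormedSpace.inclusionInDoubleDual ℝ X x + u), hg1]
    have happ : (NormedSpace.inclusionInDoubleDual ℝ X x + u) g = g x + u g := by
      rw [ContinuousLinearMap.add_apply, NormedSpace.dual_def]
    rw [happ] at hfinal
    have : ‖x‖ + 1 - 4*ε ≤ ‖NormedSpace.inclusionInDoubleDual ℝ X x + u‖ := by
      linarith [hug, hgx, hpow]
    rw [hε] at this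
    linarith

end OctAux

/-- characterisations of octahedrality via a norming subset of the sphere. -/
theorem stmt_1 (X : Type*) [NormedAddCommGroup X] [NormedSpace ℝ X] [CompleteSpace X]
    [TopologicalSpace.SeparableSpace X]
    (V : Set X) (hVsphere : ∀ x ∈ V, ‖x‖ = 1)
    (hVnorming : ∀ f : X →L[ℝ] ℝ, ‖f‖ = sSup ((fun x => f x) '' V)) :
    ((∃ v : ℕ → X, (∀ n, v n ∈ V) ∧
        ∀ u : StrongDual ℝ (StrongDual ℝ X), ‖u‖ ≤ 1 →
          MapClusterPt (StrongDual.toWeakDual u) atTop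
            (fun n => StrongDual.toWeakDual
              (NormedSpace.inclusionInDoubleDual ℝ X (v n))) →
          ∀ x : X, ‖NormedSpace.inclusionInDoubleDual ℝ X x + u‖ = ‖x‖ + 1)
      ↔ OctahedralNorm X) ∧
    (OctahedralNorm X ↔
      ∀ (n : ℕ) (c : Fin n → X) (r : Fin n → ℝ),
        (∀ i, ‖c i‖ ≤ 1) → (∀ i, 0 < r i) →
        (V ⊆ ⋃ i, closedBall (c i) (r i)) →
        ∃ i, closedBall (0 : X) 1 ⊆ closedBall (c i) (r i)) := by
  have h12 := oct_one_to_two hVsphere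
  have h23 := oct_two_to_three hVsphere hVnorming
  have h31 := fun h3 => oct_claimC_to_one (oct_three_to_claimC (V := V) hVsphere h3)
  exact ⟨⟨h12, fun h2 => h31 (h23 h2)⟩, ⟨h23, fun h3 => h12 (h31 h3)⟩⟩
end

section
/- Let X be a real Banach space, Y a finite-dimensional real Hilbert space, and let v ∈ X** with ‖v‖ = 1 and z ∈ Y with ‖z‖ = 1 be such that ‖w + v ⊗ z‖ = 1 + ‖w‖ holds for every w ∈ X ⊗_π Y, the norm of w + v ⊗ z being the projective norm in X** ⊗_π Y. Then for every y ∈ Y with ‖y‖ = 1 the equality ‖w + v ⊗ y‖ = 1 + ‖w‖ holds for every w ∈ X ⊗_π Y; consequently ‖w + v ⊗ y‖ = ‖w‖ + ‖y‖ for every w ∈ X ⊗_π Y and every y ∈ Y. -/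
open scoped TensorProduct
open NormedSpace

/-- The projective norm of an element of the algebraic tensor product of two normed
spaces: the infimum of `Σ ‖eᵢ‖ ‖fᵢ‖` over all finite representations `u = Σ eᵢ ⊗ fᵢ`. -/
noncomputable def projNorm (E F : Type*) [NormedAddCommGroup E] [NormedAddCommGroup F]
    [NormedSpace ℝ E] [NormedSpace ℝ F] (u : E ⊗[ℝ] F) : ℝ :=
  sInf {s : ℝ | ∃ (n : ℕ) (e : Fin n → E) (f : Fin n → F),
    u = ∑ i, e i ⊗ₜ[ℝ] f i ∧ s = ∑ i, ‖e i‖ * ‖f i‖}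

section PN
variable {E F E' F' : Type*} [NormedAddCommGroup E] [NormedAddCommGroup F]
  [NormedAddCommGroup E'] [NormedAddCommGroup F']
  [NormedSpace ℝ E] [NormedSpace ℝ F] [NormedSpace ℝ E'] [NormedSpace ℝ F']

def pnSet (u : E ⊗[ℝ] F) : Set ℝ :=
  {s : ℝ | ∃ (n : ℕ) (e : Fin n → E) (f : Fin n → F),
    u = ∑ i, e i ⊗ₜ[ℝ] f i ∧ s = ∑ i, ‖e i‖ * ‖f i‖}

lemma projNorm_eq (u : E ⊗[ℝ] F) : projNorm E F u = sInf (pnSet u) := rfl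

lemma pnSet_bddBelow (u : E ⊗[ℝ] F) : BddBelow (pnSet u) := by
  refine ⟨0, fun s hs => ?_⟩
  obtain ⟨n, e, f, -, rfl⟩ := hs
  exact Finset.sum_nonneg fun i _ => mul_nonneg (norm_nonneg _) (norm_nonneg _)

lemma exists_rep (u : E ⊗[ℝ] F) :
    ∃ (n : ℕ) (e : Fin n → E) (f : Fin n → F), u = ∑ i, e i ⊗ₜ[ℝ] f i := by
  induction u with
  | zero => exact ⟨0, ![], ![], by simp⟩
  | tmul x y => exact ⟨1, ![x], ![y], by simp⟩
  | add a b ha hb =>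
    obtain ⟨n, e, f, he⟩ := ha
    obtain ⟨m, e', f', he'⟩ := hb
    refine ⟨n + m, Fin.append e e', Fin.append f f', ?_⟩
    rw [Fin.sum_univ_add]
    simp [Fin.append_left, Fin.append_right, he, he']

lemma pnSet_nonempty (u : E ⊗[ℝ] F) : (pnSet u).Nonempty := by
  obtain ⟨n, e, f, h⟩ := exists_rep u
  exact ⟨_, n, e, f, h, rfl⟩

lemma projNorm_le {u : E ⊗[ℝ] F} {n : ℕ} {e : Fin n → E} {f : Fin n → F}
    (h : u = ∑ i, e i ⊗ₜ[ℝ] f i) : projNorm E F u ≤ ∑ i, ‖e i‖ * ‖f i‖ :=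
  csInf_le (pnSet_bddBelow u) ⟨n, e, f, h, rfl⟩

lemma le_projNorm {u : E ⊗[ℝ] F} {a : ℝ}
    (h : ∀ (n : ℕ) (e : Fin n → E) (f : Fin n → F),
      u = ∑ i, e i ⊗ₜ[ℝ] f i → a ≤ ∑ i, ‖e i‖ * ‖f i‖) : a ≤ projNorm E F u :=
  le_csInf (pnSet_nonempty u) (by rintro s ⟨n, e, f, hu, rfl⟩; exact h n e f hu)

lemma projNorm_nonneg (u : E ⊗[ℝ] F) : 0 ≤ projNorm E F u :=
  le_projNorm fun n e f _ =>
    Finset.sum_nonneg fun i _ => mul_nonneg (norm_nonneg _) (norm_nonneg _)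

lemma projNorm_zero : projNorm E F 0 = 0 :=
  le_antisymm (csInf_le (pnSet_bddBelow 0) ⟨0, ![], ![], by simp, by simp⟩)
    (projNorm_nonneg 0)

lemma projNorm_tmul_le (x : E) (y : F) : projNorm E F (x ⊗ₜ[ℝ] y) ≤ ‖x‖ * ‖y‖ :=
  csInf_le (pnSet_bddBelow _) ⟨1, ![x], ![y], by simp, by simp⟩

lemma pnSet_add {u w : E ⊗[ℝ] F} {s t : ℝ} (hs : s ∈ pnSet u) (ht : t ∈ pnSet w) :
    projNorm E F (u + w) ≤ s + t := by
  obtain ⟨n, e, f, hu, rfl⟩ := hs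
  obtain ⟨m, e', f', hw, rfl⟩ := ht
  have h1 : u + w = ∑ i : Fin (n + m), Fin.append e e' i ⊗ₜ[ℝ] Fin.append f f' i := by
    rw [Fin.sum_univ_add]
    simp [Fin.append_left, Fin.append_right, hu, hw]
  have h2 := projNorm_le h1
  rw [Fin.sum_univ_add] at h2
  simp only [Fin.append_left, Fin.append_right] at h2
  exact h2

lemma projNorm_add_le (u w : E ⊗[ℝ] F) :
    projNorm E F (u + w) ≤ projNorm E F u + projNorm E F w := by
  have h1 : ∀ t ∈ pnSet w, projNorm E F (u + w) - t ≤ projNorm E F u := by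
    intro t ht
    have h2 : ∀ s ∈ pnSet u, projNorm E F (u + w) - t ≤ s := by
      intro s hs
      have := pnSet_add hs ht
      linarith
    have := le_csInf (pnSet_nonempty u) h2
    rwa [← projNorm_eq] at this
  have h3 : ∀ t ∈ pnSet w, projNorm E F (u + w) - projNorm E F u ≤ t := by
    intro t ht
    linarith [h1 t ht]
  have := le_csInf (pnSet_nonempty w) h3
  rw [← projNorm_eq] at this
  linarith

lemma projNorm_smul (c : ℝ) (u : E ⊗[ℝ] F) :
    projNorm E F (c • u) = |c| * projNorm E F u := by
  have key : ∀ (c : ℝ) (u : E ⊗[ℝ] F), projNorm E F (c • u) ≤ |c| * projNorm E F u := by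
    intro c u
    rcases eq_or_ne c 0 with rfl | hc
    · simp [projNorm_zero]
    have h : |c|⁻¹ * projNorm E F (c • u) ≤ projNorm E F u := by
      refine le_projNorm fun n e f hu => ?_
      rw [inv_mul_le_iff₀ (abs_pos.mpr hc)]
      have h1 : c • u = ∑ i, (c • e i) ⊗ₜ[ℝ] f i := by
        rw [hu, Finset.smul_sum]
        simp [TensorProduct.smul_tmul']
      have h2 := projNorm_le h1
      have h3 : (∑ i, ‖c • e i‖ * ‖f i‖) = |c| * ∑ i, ‖e i‖ * ‖f i‖ := by
        rw [Finset.mul_sum]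
        simp [norm_smul, mul_assoc, Real.norm_eq_abs]
      rwa [h3] at h2
    have := mul_le_mul_of_nonneg_left h (abs_nonneg c)
    rwa [← mul_assoc, mul_inv_cancel₀ (by positivity), one_mul] at this
  refine le_antisymm (key c u) ?_
  rcases eq_or_ne c 0 with rfl | hc
  · simp [projNorm_nonneg]
  have h := key c⁻¹ (c • u)
  rw [inv_smul_smul₀ hc, abs_inv] at h
  have := mul_le_mul_of_nonneg_left h (abs_nonneg c)
  rwa [← mul_assoc, mul_inv_cancel₀ (by positivity), one_mul] at this

lemma projNorm_map_le (f : E →ₗ[ℝ] E') (g : F →ₗ[ℝ] F')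
    (hf : ∀ x, ‖f x‖ ≤ ‖x‖) (hg : ∀ y, ‖g y‖ ≤ ‖y‖) (u : E ⊗[ℝ] F) :
    projNorm E' F' (TensorProduct.map f g u) ≤ projNorm E F u := by
  refine le_projNorm fun n e e' hu => ?_
  calc projNorm E' F' (TensorProduct.map f g u)
      ≤ ∑ i, ‖f (e i)‖ * ‖g (e' i)‖ := projNorm_le (by rw [hu, map_sum]; simp)
    _ ≤ ∑ i, ‖e i‖ * ‖e' i‖ :=
        Finset.sum_le_sum fun i _ => mul_le_mul (hf _) (hg _) (norm_nonneg _)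
          (norm_nonneg _)

lemma projNorm_map_right_equiv (U : F ≃ₗᵢ[ℝ] F) (u : E ⊗[ℝ] F) :
    projNorm E F (TensorProduct.map LinearMap.id (U.toLinearEquiv : F →ₗ[ℝ] F) u)
      = projNorm E F u := by
  refine le_antisymm (projNorm_map_le _ _ (fun x => le_rfl) (fun y => (U.norm_map y).le) u) ?_
  have h2 : TensorProduct.map LinearMap.id (U.symm.toLinearEquiv : F →ₗ[ℝ] F)
      (TensorProduct.map LinearMap.id (U.toLinearEquiv : F →ₗ[ℝ] F) u) = u := by
    rw [← LinearMap.comp_apply, ← TensorProduct.map_comp]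
    have : (U.symm.toLinearEquiv : F →ₗ[ℝ] F) ∘ₗ (U.toLinearEquiv : F →ₗ[ℝ] F)
        = LinearMap.id := by ext x; simp
    rw [this, LinearMap.id_comp, TensorProduct.map_id, LinearMap.id_apply]
  calc projNorm E F u
      = projNorm E F (TensorProduct.map LinearMap.id (U.symm.toLinearEquiv : F →ₗ[ℝ] F)
        (TensorProduct.map LinearMap.id (U.toLinearEquiv : F →ₗ[ℝ] F) u)) := by rw [h2]
    _ ≤ _ := projNorm_map_le _ _ (fun x => le_rfl) (fun y => (U.symm.norm_map y).le) _

end PN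

lemma exists_isometry_of_norm_eq {Y : Type*} [NormedAddCommGroup Y] [InnerProductSpace ℝ Y]
    [FiniteDimensional ℝ Y] {z y : Y} (hz : ‖z‖ = 1) (hy : ‖y‖ = 1) :
    ∃ U : Y ≃ₗᵢ[ℝ] Y, U z = y := by
  set K : Submodule ℝ Y := ℝ ∙ (z - y) with hK
  refine ⟨Submodule.reflection Kᗮ, ?_⟩
  have hzy : z + y ∈ Kᗮ := by
    rw [hK, Submodule.mem_orthogonal_singleton_iff_inner_right]
    have h1 : (inner ℝ (z - y) (z + y) : ℝ) = ‖z‖ ^ 2 - ‖y‖ ^ 2 := by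
      rw [inner_sub_left, inner_add_right, inner_add_right,
        real_inner_self_eq_norm_sq, real_inner_self_eq_norm_sq, real_inner_comm z y]
      ring
    rw [h1, hz, hy]
    ring
  have h1 : Submodule.reflection Kᗮ (z + y) = z + y := Submodule.reflection_mem_subspace_eq_self hzy
  have h2 : Submodule.reflection Kᗮ (z - y) = -(z - y) :=
    Submodule.reflection_mem_subspace_orthogonalComplement_eq_neg
      (K.le_orthogonal_orthogonal (Submodule.mem_span_singleton_self _))
  have hz2 : z = (2 : ℝ)⁻¹ • ((z + y) + (z - y)) := by module
  have h3 := congrArg (Submodule.reflection Kᗮ) hz2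
  rw [map_smul, map_add, h1, h2] at h3
  rw [h3]
  module


set_option maxHeartbeats 1000000 in
/-- let `X` be a Banach space, `Y` a finite-dimensional real Hilbert space,
`v ∈ S_{X**}` and `z ∈ S_Y` with `‖w + v ⊗ z‖ = 1 + ‖w‖` for all `w ∈ X ⊗_π Y` (norms
in `X** ⊗_π Y`). Then for every `y ∈ S_Y` one has `‖w + v ⊗ y‖ = 1 + ‖w‖` for all
`w ∈ X ⊗_π Y`; consequently `‖w + v ⊗ y‖ = ‖w‖ + ‖y‖` for all `w ∈ X ⊗_π Y`, `y ∈ Y`. -/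
theorem stmt_5 (X : Type*) [NormedAddCommGroup X] [NormedSpace ℝ X] [CompleteSpace X]
    (Y : Type*) [NormedAddCommGroup Y] [InnerProductSpace ℝ Y] [FiniteDimensional ℝ Y]
    (v : StrongDual ℝ (StrongDual ℝ X)) (hv1 : ‖v‖ = 1)
    (z : Y) (hz : ‖z‖ = 1)
    (hvz : ∀ w : X ⊗[ℝ] Y,
      projNorm (StrongDual ℝ (StrongDual ℝ X)) Y
        (TensorProduct.map (inclusionInDoubleDual ℝ X).toLinearMap LinearMap.id w
          + v ⊗ₜ[ℝ] z)
      = 1 + projNorm X Y w) :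
    (∀ y : Y, ‖y‖ = 1 →
      ∀ w : X ⊗[ℝ] Y,
        projNorm (StrongDual ℝ (StrongDual ℝ X)) Y
          (TensorProduct.map (inclusionInDoubleDual ℝ X).toLinearMap LinearMap.id w
            + v ⊗ₜ[ℝ] y)
        = 1 + projNorm X Y w) ∧
    (∀ (y : Y) (w : X ⊗[ℝ] Y),
      projNorm (StrongDual ℝ (StrongDual ℝ X)) Y
        (TensorProduct.map (inclusionInDoubleDual ℝ X).toLinearMap LinearMap.id w
          + v ⊗ₜ[ℝ] y)
      = projNorm X Y w + ‖y‖) := by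
  set ι : X →ₗ[ℝ] StrongDual ℝ (StrongDual ℝ X) := (inclusionInDoubleDual ℝ X).toLinearMap with hι
  have hιnorm : ∀ x : X, ‖ι x‖ = ‖x‖ := fun x => (inclusionInDoubleDualLi ℝ (E := X)).norm_map x
  have part1 : ∀ y : Y, ‖y‖ = 1 →
      ∀ w : X ⊗[ℝ] Y,
        projNorm (StrongDual ℝ (StrongDual ℝ X)) Y
          (TensorProduct.map ι LinearMap.id w + v ⊗ₜ[ℝ] y)
        = 1 + projNorm X Y w := by
    intro y hy w
    obtain ⟨U, hU⟩ := exists_isometry_of_norm_eq hz hy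
    set gU : Y →ₗ[ℝ] Y := (U.toLinearEquiv : Y →ₗ[ℝ] Y) with hgU
    set gV : Y →ₗ[ℝ] Y := (U.symm.toLinearEquiv : Y →ₗ[ℝ] Y) with hgV
    set w' : X ⊗[ℝ] Y := TensorProduct.map LinearMap.id gV w with hw'
    have hUV : gU ∘ₗ gV = LinearMap.id := by
      ext x; simp [hgU, hgV]
    have key : TensorProduct.map ι LinearMap.id w + v ⊗ₜ[ℝ] y
        = TensorProduct.map LinearMap.id gU
            (TensorProduct.map ι LinearMap.id w' + v ⊗ₜ[ℝ] z) := by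
      rw [map_add]
      congr 1
      · rw [hw', ← LinearMap.comp_apply, ← LinearMap.comp_apply,
          ← TensorProduct.map_comp, ← TensorProduct.map_comp, LinearMap.comp_id,
          LinearMap.id_comp, LinearMap.comp_id, hUV]
      · rw [TensorProduct.map_tmul]
        simp [hgU, hU]
    rw [key, projNorm_map_right_equiv U, hvz w']
    congr 1
    exact projNorm_map_right_equiv U.symm w
  refine ⟨part1, fun y w => ?_⟩
  rcases eq_or_ne y 0 with rfl | hy0
  · simp only [TensorProduct.tmul_zero, add_zero, norm_zero]
    refine le_antisymm ?_ ?_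
    · apply projNorm_map_le
      · exact fun x => (hιnorm x).le
      · exact fun t => le_rfl
    have t1 := hvz w
    have t2 := projNorm_add_le (TensorProduct.map ι LinearMap.id w) (v ⊗ₜ[ℝ] z)
    have t3 := projNorm_tmul_le v z
    rw [hv1, hz, one_mul] at t3
    linarith
  · have hc : (0 : ℝ) < ‖y‖ := norm_pos_iff.mpr hy0
    set c : ℝ := ‖y‖ with hcdef
    set yy : Y := c⁻¹ • y with hyy
    have hyy1 : ‖yy‖ = 1 := by
      rw [hyy, norm_smul, norm_inv, Real.norm_eq_abs, abs_of_pos hc, ← hcdef,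
        inv_mul_cancel₀ hc.ne']
    have key2 : TensorProduct.map ι LinearMap.id w + v ⊗ₜ[ℝ] y
        = c • (TensorProduct.map ι LinearMap.id (c⁻¹ • w) + v ⊗ₜ[ℝ] yy) := by
      rw [smul_add, map_smul, smul_smul, mul_inv_cancel₀ hc.ne', one_smul, hyy,
        TensorProduct.tmul_smul, smul_smul, mul_inv_cancel₀ hc.ne', one_smul]
    rw [key2, projNorm_smul, part1 yy hyy1 (c⁻¹ • w), projNorm_smul, abs_of_pos hc,
      abs_inv, abs_of_pos hc]
    field_simp
    ring
end

section
/- Let Y be a nonzero finite-dimensional real Banach space which embeds isometrically into L1(μ) for some measure μ, and let X be a Banach space with an octahedral norm. Then the space L(Y, X) of bounded linear operators from Y to X, with the operator norm, has an octahedral norm. -/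
open MeasureTheory

lemma octB {X : Type*} [NormedAddCommGroup X] [NormedSpace ℝ X]
    (hX : OctahedralNorm X) {ε : ℝ} (hε0 : 0 < ε) (hε1 : ε < 1)
    {κ : Type*} (s : Finset κ) (F : Submodule ℝ X) (hF : FiniteDimensional ℝ F) :
    ∃ x : κ → X, (∀ j ∈ s, ‖x j‖ = 1) ∧
      ∀ e ∈ F, ∀ c : κ → ℝ,
        (1 - ε) ^ s.card * (‖e‖ + ∑ j ∈ s, |c j|) ≤ ‖e + ∑ j ∈ s, c j • x j‖ := by
  classical
  induction s using Finset.cons_induction generalizing F with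
  | empty => exact ⟨fun _ => 0, by simp, by simp⟩
  | cons a s ha ih =>
    obtain ⟨x, hx1, hx2⟩ := ih F hF
    haveI : FiniteDimensional ℝ (Submodule.span ℝ (x '' ↑s)) :=
      FiniteDimensional.span_of_finite ℝ (s.finite_toSet.image x)
    haveI hF' : FiniteDimensional ℝ ↥(F ⊔ Submodule.span ℝ (x '' ↑s)) :=
      Submodule.finiteDimensional_sup _ _
    obtain ⟨z, hz1, hz2⟩ := hX (F ⊔ Submodule.span ℝ (x '' ↑s)) hF' ε hε0
    refine ⟨Function.update x a z, ?_, ?_⟩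
    · intro j hj
      rcases Finset.mem_cons.mp hj with rfl | hjs
      · simp [hz1]
      · have hja : j ≠ a := by rintro rfl; exact ha hjs
        rw [Function.update_of_ne hja]; exact hx1 j hjs
    · intro e he c
      have hsum : ∑ j ∈ Finset.cons a s ha, c j • Function.update x a z j
          = (e + ∑ j ∈ s, c j • x j) + c a • z - e := by
        rw [Finset.sum_cons]
        have : ∑ j ∈ s, c j • Function.update x a z j = ∑ j ∈ s, c j • x j := by
          refine Finset.sum_congr rfl fun j hj => ?_
          have hja : j ≠ a := by rintro rfl; exact ha hj
          rw [Function.update_of_ne hja]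
        rw [Function.update_self, this]; abel
      have hmem : e + ∑ j ∈ s, c j • x j ∈ F ⊔ Submodule.span ℝ (x '' ↑s) := by
        refine Submodule.add_mem _ (Submodule.mem_sup_left he) ?_
        exact Submodule.sum_mem _ fun j hj => Submodule.smul_mem _ _
          (Submodule.mem_sup_right (Submodule.subset_span ⟨j, hj, rfl⟩))
      have h1 := hz2 _ hmem (c a)
      have h2 := hx2 e he c
      have hK0 : (0:ℝ) ≤ (1 - ε) ^ s.card := pow_nonneg (by linarith) _
      have hK1 : (1 - ε) ^ s.card ≤ 1 := pow_le_one₀ (by linarith) (by linarith)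
      have hca : (0:ℝ) ≤ |c a| := abs_nonneg _
      calc (1 - ε) ^ (Finset.cons a s ha).card * (‖e‖ + ∑ j ∈ Finset.cons a s ha, |c j|)
          = (1 - ε) * ((1 - ε) ^ s.card * (‖e‖ + ∑ j ∈ s, |c j|)
              + (1 - ε) ^ s.card * |c a|) := by
            rw [Finset.card_cons, Finset.sum_cons, pow_succ]; ring
        _ ≤ (1 - ε) * (‖e + ∑ j ∈ s, c j • x j‖ + |c a|) := by
            have h3 : (1 - ε) ^ s.card * |c a| ≤ |c a| := mul_le_of_le_one_left hca hK1
            exact mul_le_mul_of_nonneg_left (add_le_add h2 h3) (by linarith)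
        _ ≤ ‖(e + ∑ j ∈ s, c j • x j) + c a • z‖ := h1
        _ = ‖e + ∑ j ∈ Finset.cons a s ha, c j • Function.update x a z j‖ := by
            rw [hsum]; congr 1; abel

set_option maxHeartbeats 1000000 in
lemma lemA {α : Type*} [MeasurableSpace α] {μ : Measure α}
    {Y : Type*} [NormedAddCommGroup Y] [NormedSpace ℝ Y] [FiniteDimensional ℝ Y]
    (J : Y →ₗᵢ[ℝ] Lp ℝ 1 μ) {δ : ℝ} (hδ : 0 < δ) :
    ∃ (κ : Type) (s : Finset κ) (φ : κ → (Y →L[ℝ] ℝ)),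
      ∀ y : Y, (1 - δ) * ‖y‖ ≤ ∑ j ∈ s, |φ j y| ∧ ∑ j ∈ s, |φ j y| ≤ (1 + δ) * ‖y‖ := by
  classical
  set d := Module.finrank ℝ Y with hd
  set b : Module.Basis (Fin d) ℝ Y := Module.finBasis ℝ Y with hb
  set co : Fin d → (Y →L[ℝ] ℝ) := fun i => LinearMap.toContinuousLinearMap (b.coord i) with hco
  set C : ℝ := ∑ i, ‖co i‖ with hC
  have hC0 : 0 ≤ C := Finset.sum_nonneg fun i _ => norm_nonneg _
  have hCy : ∀ y : Y, ∑ i, |co i y| ≤ C * ‖y‖ := by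
    intro y
    rw [hC, Finset.sum_mul]
    refine Finset.sum_le_sum fun i _ => ?_
    rw [← Real.norm_eq_abs]
    exact (co i).le_opNorm y
  set η : ℝ := δ / (C + 1) with hη
  have hη0 : 0 < η := by positivity
  -- approximate J (b i) by simple functions
  have happ : ∀ i : Fin d, ∃ g : Lp.simpleFunc ℝ 1 μ, ‖J (b i) - (g : Lp ℝ 1 μ)‖ < η := by
    intro i
    obtain ⟨g, hg⟩ := (Lp.simpleFunc.denseRange (E := ℝ) (p := 1) (μ := μ)
      (by norm_num)).exists_dist_lt (J (b i)) hη0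
    exact ⟨g, by rwa [dist_eq_norm] at hg⟩
  choose G hG using happ
  set g : Fin d → SimpleFunc α ℝ := fun i => Lp.simpleFunc.toSimpleFunc (G i) with hgdef
  have hgae : ∀ i, ⇑(g i) =ᶠ[ae μ] ⇑((G i : Lp ℝ 1 μ)) := fun i =>
    Lp.simpleFunc.toSimpleFunc_eq_toFun (G i)
  have hgint : ∀ i, Integrable (⇑(g i)) μ := fun i =>
    (L1.integrable_coeFn ((G i : Lp ℝ 1 μ))).congr (hgae i).symm
  -- the joint simple function
  set H : SimpleFunc α (Fin d → ℝ) :=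
    ⟨fun t i => g i t, by
        intro r
        have : (fun t => (fun i => g i t)) ⁻¹' {r} = ⋂ i, (g i) ⁻¹' {r i} := by
          ext t
          simp [funext_iff]
        rw [this]
        exact MeasurableSet.iInter fun i => (g i).measurableSet_fiber (r i),
      by
        refine (Set.Finite.pi (fun i => (g i).finite_range)).subset ?_
        rintro - ⟨t, rfl⟩
        intro i _
        exact ⟨t, rfl⟩⟩ with hHdef
  have hHcoe : ∀ t i, H t i = g i t := fun t i => rfl
  have hHint : Integrable (⇑H) μ := by
    refine Integrable.mono' (integrable_finset_sum Finset.univ fun i _ => (hgint i).abs)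
      H.stronglyMeasurable.aestronglyMeasurable ?_
    filter_upwards with t
    refine (pi_norm_le_iff_of_nonneg
      (Finset.sum_nonneg fun i _ => abs_nonneg _)).mpr fun i => ?_
    rw [Real.norm_eq_abs]
    exact Finset.single_le_sum (f := fun i => |g i t|) (fun j _ => abs_nonneg _)
      (Finset.mem_univ i)
  set φ : (Fin d → ℝ) → (Y →L[ℝ] ℝ) :=
    fun r => (μ (⇑H ⁻¹' {r})).toReal • (∑ i, (r i) • co i) with hφdef
  refine ⟨Fin d → ℝ, H.range, φ, fun y => ?_⟩
  set c : Fin d → ℝ := fun i => co i y with hc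
  have hcrepr : ∀ i, c i = b.repr y i := fun i => by
    simp [hc, hco, b.coord_apply, LinearMap.coe_toContinuousLinearMap']
  have hyrepr : y = ∑ i, c i • b i := by
    conv_lhs => rw [← b.sum_repr y]
    exact Finset.sum_congr rfl fun i _ => by rw [hcrepr i]
  set z : Lp ℝ 1 μ := ∑ i, c i • ((G i : Lp ℝ 1 μ)) with hz
  -- step 1 : the sum of |φ r y| equals ‖z‖
  have hzae : ⇑z =ᶠ[ae μ] fun t => ∑ i, c i * g i t := by
    have : ∀ s : Finset (Fin d), ⇑(∑ i ∈ s, c i • ((G i : Lp ℝ 1 μ)))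
        =ᶠ[ae μ] fun t => ∑ i ∈ s, c i * g i t := by
      intro s
      induction s using Finset.cons_induction with
      | empty => simp only [Finset.sum_empty]; exact Lp.coeFn_zero ℝ 1 μ
      | cons a s ha ih =>
        rw [Finset.sum_cons]
        filter_upwards [Lp.coeFn_add (c a • ((G a : Lp ℝ 1 μ))) (∑ i ∈ s, c i • ((G i : Lp ℝ 1 μ))),
          Lp.coeFn_smul (c a) ((G a : Lp ℝ 1 μ)), ih, hgae a] with t h1 h2 h3 h4
        simp only [Finset.sum_cons, h1, Pi.add_apply, h2, Pi.smul_apply, h3, smul_eq_mul, h4]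
    exact this Finset.univ
  have step1 : ∑ r ∈ H.range, |φ r y| = ‖z‖ := by
    have hmap : ∀ t, (H.map (fun v => |∑ i, c i * v i|)) t = |∑ i, c i * g i t| := by
      intro t; rfl
    have hintmap : Integrable (⇑(H.map (fun v => |∑ i, c i * v i|))) μ := by
      have : Integrable (fun t => |∑ i, c i * g i t|) μ :=
        (integrable_finset_sum Finset.univ fun i _ => (hgint i).const_mul (c i)).abs
      exact this.congr (by filter_upwards with t; rw [hmap])
    have e1 : (H.map (fun v => |∑ i, c i * v i|)).integral μ
        = ∑ r ∈ H.range, (μ (⇑H ⁻¹' {r})).toReal • |∑ i, c i * r i| :=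
      SimpleFunc.map_integral H _ hHint (by simp)
    have e2 : (H.map (fun v => |∑ i, c i * v i|)).integral μ
        = ∫ t, |∑ i, c i * g i t| ∂μ := by
      rw [SimpleFunc.integral_eq_integral _ hintmap]
      exact integral_congr_ae (by filter_upwards with t; rw [hmap])
    have e3 : ‖z‖ = ∫ t, |∑ i, c i * g i t| ∂μ := by
      rw [L1.norm_eq_integral_norm]
      refine integral_congr_ae ?_
      filter_upwards [hzae] with t ht
      rw [ht, Real.norm_eq_abs]
    have e4 : ∀ r, |φ r y| = (μ (⇑H ⁻¹' {r})).toReal • |∑ i, c i * r i| := by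
      intro r
      have : φ r y = (μ (⇑H ⁻¹' {r})).toReal * ∑ i, c i * r i := by
        simp only [hφdef, ContinuousLinearMap.smul_apply, ContinuousLinearMap.sum_apply,
          ContinuousLinearMap.smul_apply, smul_eq_mul]
        congr 1
        exact Finset.sum_congr rfl fun i _ => mul_comm _ _
      rw [this, smul_eq_mul, abs_mul, abs_of_nonneg ENNReal.toReal_nonneg]
    calc ∑ r ∈ H.range, |φ r y| = ∑ r ∈ H.range, (μ (⇑H ⁻¹' {r})).toReal • |∑ i, c i * r i| :=
          Finset.sum_congr rfl fun r _ => e4 r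
      _ = (H.map (fun v => |∑ i, c i * v i|)).integral μ := e1.symm
      _ = ‖z‖ := by rw [e2, ← e3]
  -- step 2 : ‖z - J y‖ small
  have step2 : ‖z - J y‖ ≤ C * ‖y‖ * η := by
    have hJy : J y = ∑ i, c i • J (b i) := by
      conv_lhs => rw [hyrepr]
      rw [map_sum]
      exact Finset.sum_congr rfl fun i _ => J.map_smul _ _
    have hzd : z - J y = ∑ i, c i • (((G i : Lp ℝ 1 μ)) - J (b i)) := by
      rw [hz, hJy, ← Finset.sum_sub_distrib]
      exact Finset.sum_congr rfl fun i _ => (smul_sub _ _ _).symm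
    rw [hzd]
    calc ‖∑ i, c i • (((G i : Lp ℝ 1 μ)) - J (b i))‖
        ≤ ∑ i, ‖c i • (((G i : Lp ℝ 1 μ)) - J (b i))‖ := norm_sum_le _ _
      _ ≤ ∑ i, |c i| * η := by
          refine Finset.sum_le_sum fun i _ => ?_
          rw [norm_smul, Real.norm_eq_abs]
          refine mul_le_mul_of_nonneg_left ?_ (abs_nonneg _)
          rw [norm_sub_rev]
          exact (hG i).le
      _ = (∑ i, |c i|) * η := by rw [Finset.sum_mul]
      _ ≤ C * ‖y‖ * η := mul_le_mul_of_nonneg_right (hCy y) hη0.le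
  have step3 : C * ‖y‖ * η ≤ δ * ‖y‖ := by
    have hCC : C / (C + 1) ≤ 1 := div_le_one_of_le₀ (by linarith) (by linarith)
    have e : C * ‖y‖ * η = δ * ‖y‖ * (C / (C + 1)) := by rw [hη]; ring
    rw [e]
    exact mul_le_of_le_one_right (by positivity) hCC
  have hJnorm : ‖J y‖ = ‖y‖ := J.norm_map y
  have hzy : |‖z‖ - ‖y‖| ≤ δ * ‖y‖ := by
    have h := (abs_norm_sub_norm_le z (J y)).trans (step2.trans step3)
    rwa [hJnorm] at h
  rw [step1]
  constructor
  · have := abs_le.mp hzy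
    linarith [this.1]
  · have := abs_le.mp hzy
    linarith [this.2]

set_option maxHeartbeats 1000000 in
set_option synthInstance.maxHeartbeats 200000 in
/-- if the nonzero finite-dimensional space `Y` embeds isometrically into
`L₁(μ)` and `X` has an octahedral norm, then `L(Y, X)` has an octahedral norm. -/
theorem stmt_10 (Y : Type*) [NormedAddCommGroup Y] [NormedSpace ℝ Y]
    [FiniteDimensional ℝ Y] [Nontrivial Y]
    (α : Type*) [MeasurableSpace α] (μ : Measure α)
    (J : Y →ₗᵢ[ℝ] Lp ℝ 1 μ)
    (X : Type*) [NormedAddCommGroup X] [NormedSpace ℝ X] [CompleteSpace X]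
    (hX : OctahedralNorm X) :
    OctahedralNorm (Y →L[ℝ] X) := by
  classical
  intro E hE ε hε
  haveI := hE
  by_cases hε1 : 1 ≤ ε
  · -- trivial case : (1 - ε) ≤ 0
    obtain ⟨y₀, hy₀⟩ := exists_ne (0 : Y)
    obtain ⟨ψ, hψ1, -⟩ := exists_dual_vector ℝ y₀ (norm_ne_zero_iff.mpr hy₀)
    obtain ⟨x, hx1, -⟩ := hX ⊥ inferInstance 1 one_pos
    refine ⟨ψ.smulRight x, ?_, ?_⟩
    · rw [ContinuousLinearMap.norm_smulRight_apply, hψ1, hx1, one_mul]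
    · intro e he l
      have h1 : (1 - ε) * (‖e‖ + |l|) ≤ 0 :=
        mul_nonpos_of_nonpos_of_nonneg (by linarith) (by positivity)
      exact h1.trans (norm_nonneg _)
  push_neg at hε1
  set δ : ℝ := ε / 3 with hδdef
  have hδ0 : 0 < δ := by positivity
  have hδ1 : δ < 1/3 := by rw [hδdef]; linarith
  obtain ⟨κ, s, φ, hφ⟩ := lemA J hδ0
  set N := s.card with hN
  set ε' : ℝ := ε / (3 * ((N : ℝ) + 1)) with hε'def
  have hNnn : (0:ℝ) ≤ (N:ℝ) := Nat.cast_nonneg _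
  have hε'0 : 0 < ε' := by positivity
  have hε'3 : ε' ≤ ε / 3 := by
    rw [hε'def]
    apply div_le_div_of_nonneg_left hε.le (by norm_num) (by nlinarith)
  have hε'1 : ε' < 1 := by linarith
  have hNε : (N:ℝ) * ε' ≤ ε / 3 := by
    have h1 : (N:ℝ) * ε' = ε/3 * ((N:ℝ)/((N:ℝ)+1)) := by
      rw [hε'def]; field_simp
    rw [h1]
    have h2 : (N:ℝ)/((N:ℝ)+1) ≤ 1 := div_le_one_of_le₀ (by linarith) (by linarith)
    exact mul_le_of_le_one_right (by positivity) h2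
  set K : ℝ := (1 - ε') ^ N with hK
  have hKε : 1 - ε/3 ≤ K := by
    have hpow := one_add_mul_le_pow (a := -ε') (by linarith) N
    rw [← sub_eq_add_neg] at hpow
    have : 1 + (N:ℝ) * (-ε') = 1 - (N:ℝ) * ε' := by ring
    rw [this] at hpow
    calc 1 - ε/3 ≤ 1 - (N:ℝ)*ε' := by linarith
      _ ≤ K := hpow
  have hK0 : (0:ℝ) ≤ K := pow_nonneg (by linarith) _
  have hK1 : K ≤ 1 := pow_le_one₀ (by linarith) (by linarith)
  have hKpos : 0 < K := by linarith
  -- the finite-dimensional subspace F of X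
  set m := Module.finrank ℝ E with hm
  set B : Module.Basis (Fin m) ℝ E := Module.finBasis ℝ E with hB
  set F : Submodule ℝ X :=
    ⨆ i : Fin m, LinearMap.range (((B i : Y →L[ℝ] X)) : Y →ₗ[ℝ] X) with hF
  haveI hFfd : FiniteDimensional ℝ F := Submodule.finiteDimensional_iSup _
  have hmemF : ∀ S ∈ E, ∀ y : Y, S y ∈ F := by
    intro S hS y
    have hS' : S = ∑ i, B.repr ⟨S, hS⟩ i • ((B i) : Y →L[ℝ] X) := by
      have h := congrArg E.subtype (B.sum_repr ⟨S, hS⟩).symm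
      simpa only [map_sum, map_smul, Submodule.subtype_apply, Submodule.coe_subtype] using h
    rw [hS']
    rw [ContinuousLinearMap.sum_apply]
    refine Submodule.sum_mem _ fun i _ => ?_
    rw [ContinuousLinearMap.smul_apply]
    exact Submodule.smul_mem _ _ (Submodule.mem_iSup_of_mem i ⟨y, rfl⟩)
  obtain ⟨x, hx1, hx2⟩ := octB hX hε'0 hε'1 s F hFfd
  -- the operator T₀
  set T₀ : Y →L[ℝ] X := ∑ j ∈ s, (φ j).smulRight (x j) with hT₀
  have hT₀apply : ∀ y : Y, T₀ y = ∑ j ∈ s, φ j y • x j := by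
    intro y
    rw [hT₀, ContinuousLinearMap.sum_apply]
    exact Finset.sum_congr rfl fun j _ => ContinuousLinearMap.smulRight_apply
  have hT₀up : ‖T₀‖ ≤ 1 + δ := by
    refine ContinuousLinearMap.opNorm_le_bound _ (by positivity) fun y => ?_
    calc ‖T₀ y‖ = ‖∑ j ∈ s, φ j y • x j‖ := by rw [hT₀apply]
      _ ≤ ∑ j ∈ s, ‖φ j y • x j‖ := norm_sum_le _ _
      _ = ∑ j ∈ s, |φ j y| := Finset.sum_congr rfl fun j hj => by
          rw [norm_smul, Real.norm_eq_abs, hx1 j hj, mul_one]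
      _ ≤ (1 + δ) * ‖y‖ := (hφ y).2
  have hT₀low : ∀ y : Y, K * ((1 - δ) * ‖y‖) ≤ ‖T₀ y‖ := by
    intro y
    calc K * ((1 - δ) * ‖y‖) ≤ K * (∑ j ∈ s, |φ j y|) :=
          mul_le_mul_of_nonneg_left (hφ y).1 hK0
      _ = K * (‖(0:X)‖ + ∑ j ∈ s, |φ j y|) := by rw [norm_zero, zero_add]
      _ ≤ ‖(0:X) + ∑ j ∈ s, φ j y • x j‖ := hx2 0 (Submodule.zero_mem F) _
      _ = ‖T₀ y‖ := by rw [zero_add, ← hT₀apply]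
  have hT₀pos : 0 < ‖T₀‖ := by
    obtain ⟨y₀, hy₀⟩ := exists_ne (0 : Y)
    have h1 : 0 < K * ((1 - δ) * ‖y₀‖) :=
      mul_pos hKpos (mul_pos (by linarith) (norm_pos_iff.mpr hy₀))
    have h2 : 0 < ‖T₀ y₀‖ := lt_of_lt_of_le h1 (hT₀low y₀)
    have h3 := T₀.le_opNorm y₀
    nlinarith [norm_nonneg y₀]
  set T : Y →L[ℝ] X := ‖T₀‖⁻¹ • T₀ with hT
  have hT1 : ‖T‖ = 1 := by
    rw [hT]
    rw [norm_smul (‖T₀‖⁻¹) T₀, norm_inv, norm_norm]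
    exact inv_mul_cancel₀ hT₀pos.ne'
  refine ⟨T, hT1, ?_⟩
  intro S hS l
  set c₀ : ℝ := (1 + δ)⁻¹ * (1 - δ) with hc₀
  have hc₀nn : 0 ≤ c₀ := mul_nonneg (by positivity) (by linarith)
  have hcoef : 1 - ε ≤ K * c₀ := by
    rw [hc₀]
    have hd : (0:ℝ) < 1 + δ := by linarith
    rw [show K * ((1+δ)⁻¹ * (1-δ)) = K * (1-δ) / (1+δ) by ring]
    rw [le_div_iff₀ hd]
    nlinarith
  apply le_of_forall_pos_le_add
  intro η hη
  -- choose a nearly norming vector y for S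
  obtain ⟨y, hy0, hylow⟩ : ∃ y : Y, y ≠ 0 ∧ (‖S‖ - η) * ‖y‖ ≤ ‖S y‖ := by
    rcases lt_or_ge (‖S‖ - η) 0 with h | h
    · obtain ⟨y₀, hy₀⟩ := exists_ne (0 : Y)
      exact ⟨y₀, hy₀, le_trans (by nlinarith [norm_nonneg y₀, norm_pos_iff.mpr hy₀])
        (norm_nonneg _)⟩
    · obtain ⟨y, hy1, hy2⟩ := S.exists_lt_apply_of_lt_opNorm (r := ‖S‖ - η) (by linarith)
      refine ⟨y, ?_, ?_⟩
      · rintro rfl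
        rw [map_zero, norm_zero] at hy2
        linarith
      · calc (‖S‖ - η) * ‖y‖ ≤ (‖S‖ - η) * 1 := by
              exact mul_le_mul_of_nonneg_left hy1.le h
          _ ≤ ‖S y‖ := by rw [mul_one]; exact hy2.le
  have hynorm : 0 < ‖y‖ := norm_pos_iff.mpr hy0
  have happly : (S + l • T) y = S y + ∑ j ∈ s, ((l * ‖T₀‖⁻¹) * φ j y) • x j := by
    rw [ContinuousLinearMap.add_apply, ContinuousLinearMap.smul_apply, hT,
      ContinuousLinearMap.smul_apply, hT₀apply]
    congr 1
    rw [smul_smul, Finset.smul_sum]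
    exact Finset.sum_congr rfl fun j _ => by rw [smul_smul]
  have h2 := hx2 (S y) (hmemF S hS y) (fun j => (l * ‖T₀‖⁻¹) * φ j y)
  have h3 : ∑ j ∈ s, |(l * ‖T₀‖⁻¹) * φ j y| = |l| * (‖T₀‖⁻¹ * ∑ j ∈ s, |φ j y|) := by
    rw [Finset.mul_sum, Finset.mul_sum]
    refine Finset.sum_congr rfl fun j _ => ?_
    rw [abs_mul, abs_mul, abs_of_nonneg (inv_nonneg.mpr (norm_nonneg _))]
    ring
  have h5 : (1 + δ)⁻¹ ≤ ‖T₀‖⁻¹ := by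
    apply inv_anti₀ hT₀pos hT₀up
  have hC1 : |l| * (c₀ * ‖y‖) ≤ ∑ j ∈ s, |(l * ‖T₀‖⁻¹) * φ j y| := by
    rw [h3, hc₀]
    refine mul_le_mul_of_nonneg_left ?_ (abs_nonneg l)
    calc (1+δ)⁻¹ * (1-δ) * ‖y‖ = (1+δ)⁻¹ * ((1-δ) * ‖y‖) := by ring
      _ ≤ ‖T₀‖⁻¹ * ∑ j ∈ s, |φ j y| :=
          mul_le_mul h5 (hφ y).1 (mul_nonneg (by linarith) (norm_nonneg _))
            (inv_nonneg.mpr (norm_nonneg _))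
  have hfull : (K * ((‖S‖ - η) + |l| * c₀)) * ‖y‖ ≤ ‖S + l • T‖ * ‖y‖ := by
    calc (K * ((‖S‖ - η) + |l| * c₀)) * ‖y‖
        = K * ((‖S‖ - η) * ‖y‖ + |l| * (c₀ * ‖y‖)) := by ring
      _ ≤ K * (‖S y‖ + ∑ j ∈ s, |(l * ‖T₀‖⁻¹) * φ j y|) :=
          mul_le_mul_of_nonneg_left (add_le_add hylow hC1) hK0
      _ ≤ ‖S y + ∑ j ∈ s, ((l * ‖T₀‖⁻¹) * φ j y) • x j‖ := h2
      _ = ‖(S + l • T) y‖ := by rw [happly]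
      _ ≤ ‖S + l • T‖ * ‖y‖ := (S + l • T).le_opNorm y
  have hdiv : K * ((‖S‖ - η) + |l| * c₀) ≤ ‖S + l • T‖ :=
    le_of_mul_le_mul_right hfull hynorm
  have e1 : (1 - ε) * ‖S‖ ≤ K * ‖S‖ := mul_le_mul_of_nonneg_right (by linarith) (norm_nonneg S)
  have e2 : (1 - ε) * |l| ≤ (K * c₀) * |l| := mul_le_mul_of_nonneg_right hcoef (abs_nonneg l)
  have e3 : K * η ≤ η := mul_le_of_le_one_left hη.le hK1
  nlinarith [hdiv, e1, e2, e3]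
end
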